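/- arXiv:1407.5155 — 3 statements merged into one kernel-verified Lean document; each statement's English description precedes it below -/
import Mathlib

section
/- Let D° ∈ 𝒟 with μ_k(D°) < 1/2. Let α° ∈ ℝ^p have support J of size k, set s° = sign(α°), and assume min_{j∈J}|α°_j| ≥ α̲ > 0 and ‖α°‖₂ ≤ M_α; let ε ∈ ℝ^m with ‖ε‖₂ ≤ M_ε, and set x = D°α° + ε. Assume λ ≤ α̲/2. Let D ∈ 𝒟 with r := ‖D − D°‖_F < (2λ/(7M_α))·(1 − 2μ_k(D°)), and assume M_ε < λ(1 − 2μ_k(D°)) − (7/2)·M_α·r. Then α̂_x(D|s°) is the unique minimizer over ℝ^p of α ↦ ½‖x − Dα‖₂² + λ‖α‖₁, sign(α̂_x(D|s°)) = s°, and f_x(D) = φ_x(D|s°); the same conclusions hold for D° in place of D, so f_x(D) − f_x(D°) = Δφ_x(D;D°|s°). -/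
open MeasureTheory Matrix Finset
open scoped ENNReal NNReal

noncomputable section

/-- squared ℓ² norm of a vector -/
def l2sq {n : Type*} [Fintype n] (v : n → ℝ) : ℝ := ∑ i, v i ^ 2

/-- ℓ² norm of a vector -/
def l2 {n : Type*} [Fintype n] (v : n → ℝ) : ℝ := Real.sqrt (l2sq v)

/-- ℓ¹ norm of a vector -/
def l1 {n : Type*} [Fintype n] (v : n → ℝ) : ℝ := ∑ i, |v i|

/-- ℓ^∞ (sup) norm of a vector -/
def linf {n : Type*} (v : n → ℝ) : ℝ := sSup (Set.range fun i => |v i|)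

/-- squared Frobenius norm -/
def frobSq {n q : Type*} [Fintype n] [Fintype q] (A : Matrix n q ℝ) : ℝ :=
  ∑ i, ∑ j, A i j ^ 2

/-- Frobenius norm -/
def frob {n q : Type*} [Fintype n] [Fintype q] (A : Matrix n q ℝ) : ℝ :=
  Real.sqrt (frobSq A)

/-- spectral (operator ℓ²→ℓ²) norm -/
def spec {n q : Type*} [Fintype n] [Fintype q] (A : Matrix n q ℝ) : ℝ :=
  sSup {t : ℝ | ∃ x : q → ℝ, l2 x ≤ 1 ∧ t = l2 (A.mulVec x)}

/-- operator ℓ∞→ℓ∞ norm: max row sum of absolute values -/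
def opInf {n q : Type*} [Fintype q] (A : Matrix n q ℝ) : ℝ :=
  sSup (Set.range fun i => ∑ j, |A i j|)

/-- j-th column of a matrix -/
def col {m p : ℕ} (D : Matrix (Fin m) (Fin p) ℝ) (j : Fin p) : Fin m → ℝ :=
  fun i => D i j

/-- the oblique manifold: matrices with unit ℓ²-norm columns -/
def Oblique {m p : ℕ} (D : Matrix (Fin m) (Fin p) ℝ) : Prop :=
  ∀ j, l2sq (_root_.col D j) = 1

/-- cumulative coherence μ_k -/
def mu {m p : ℕ} (k : ℕ) (D : Matrix (Fin m) (Fin p) ℝ) : ℝ :=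
  sSup {t : ℝ | ∃ J : Finset (Fin p), J.card ≤ k ∧ ∃ j, j ∉ J ∧
    t = ∑ i ∈ J, |∑ r, D r i * D r j|}

/-- lower restricted isometry constant δ̲_k -/
def deltaLow {m p : ℕ} (k : ℕ) (D : Matrix (Fin m) (Fin p) ℝ) : ℝ :=
  sInf {δ : ℝ | 0 ≤ δ ∧ ∀ J : Finset (Fin p), J.card = k →
    ∀ z : Fin p → ℝ, (∀ i, i ∉ J → z i = 0) →
      (1 - δ) * l2sq z ≤ l2sq (D.mulVec z)}

/-- upper restricted isometry constant δ̄_k -/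
def deltaUp {m p : ℕ} (k : ℕ) (D : Matrix (Fin m) (Fin p) ℝ) : ℝ :=
  sInf {δ : ℝ | 0 ≤ δ ∧ ∀ J : Finset (Fin p), J.card = k →
    ∀ z : Fin p → ℝ, (∀ i, i ∉ J → z i = 0) →
      l2sq (D.mulVec z) ≤ (1 + δ) * l2sq z}

/-- submatrix D_J of the columns indexed by J -/
def colsub {m p : ℕ} (D : Matrix (Fin m) (Fin p) ℝ) (J : Finset (Fin p)) :
    Matrix (Fin m) J ℝ := fun i j => D i j.1

/-- Gram matrix D_Jᵀ D_J -/
def gram {m p : ℕ} (D : Matrix (Fin m) (Fin p) ℝ) (J : Finset (Fin p)) :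
    Matrix J J ℝ := (colsub D J)ᵀ * colsub D J

/-- Θ_J(D) = (D_Jᵀ D_J)⁻¹ -/
def theta {m p : ℕ} (D : Matrix (Fin m) (Fin p) ℝ) (J : Finset (Fin p)) :
    Matrix J J ℝ := (gram D J)⁻¹

/-- pseudo-inverse D_J⁺ = Θ_J D_Jᵀ -/
def pinv {m p : ℕ} (D : Matrix (Fin m) (Fin p) ℝ) (J : Finset (Fin p)) :
    Matrix J (Fin m) ℝ := theta D J * (colsub D J)ᵀ

/-- orthogonal projector P_J(D) = D_J Θ_J D_Jᵀ -/
def proj {m p : ℕ} (D : Matrix (Fin m) (Fin p) ℝ) (J : Finset (Fin p)) :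
    Matrix (Fin m) (Fin m) ℝ := colsub D J * pinv D J

/-- Lasso objective L_x(D, α) -/
def lasso {m p : ℕ} (lam : ℝ) (x : Fin m → ℝ) (D : Matrix (Fin m) (Fin p) ℝ)
    (a : Fin p → ℝ) : ℝ :=
  (1/2) * l2sq (fun i => x i - D.mulVec a i) + lam * l1 a

/-- f_x(D) = inf_α L_x(D, α) -/
def fobj {m p : ℕ} (lam : ℝ) (x : Fin m → ℝ) (D : Matrix (Fin m) (Fin p) ℝ) : ℝ :=
  ⨅ a : Fin p → ℝ, lasso lam x D a

/-- φ_x(D|s) for a sign vector s with support J -/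
def phi {m p : ℕ} (lam : ℝ) (x : Fin m → ℝ) (D : Matrix (Fin m) (Fin p) ℝ)
    (J : Finset (Fin p)) (s : Fin p → ℝ) : ℝ :=
  (1/2) * (l2sq x - ∑ a : J, ∑ b : J,
    ((colsub D J)ᵀ.mulVec x a - lam * s a.1) * theta D J a b
      * ((colsub D J)ᵀ.mulVec x b - lam * s b.1))

/-- α̂_x(D|s): the closed-form candidate minimizer with sign pattern s and support J -/
def alphaHat {m p : ℕ} (lam : ℝ) (x : Fin m → ℝ) (D : Matrix (Fin m) (Fin p) ℝ)
    (J : Finset (Fin p)) (s : Fin p → ℝ) : Fin p → ℝ :=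
  fun i => if h : i ∈ J then
    (pinv D J).mulVec x ⟨i, h⟩ - lam * (theta D J).mulVec (fun a => s a.1) ⟨i, h⟩
  else 0

/-- sign vector of a coefficient vector -/
def sgnv {p : ℕ} (a : Fin p → ℝ) : Fin p → ℝ := fun i => Real.sign (a i)

/-- the noisy signal x = D° α° + ε -/
def xsig {m p : ℕ} (Do : Matrix (Fin m) (Fin p) ℝ) (a : Fin p → ℝ) (e : Fin m → ℝ) :
    Fin m → ℝ := fun i => Do.mulVec a i + e i

/-- average over all subsets J ⊆ {1,…,p} of size k -/
def EJ {p : ℕ} (k : ℕ) (f : Finset (Fin p) → ℝ) : ℝ :=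
  ((p.choose k : ℝ))⁻¹ * ∑ S ∈ Finset.powersetCard k (Finset.univ : Finset (Fin p)), f S

/-- the constant C_min -/
def CminV {m p : ℕ} (k : ℕ) (Do : Matrix (Fin m) (Fin p) ℝ) (Ea2 Ea1 : ℝ) : ℝ :=
  24 * (Ea1 / Real.sqrt Ea2) ^ 2 * (spec Do + 1) * ((k : ℝ) / (p : ℝ)) *
    frob (Doᵀ * Do - (1 : Matrix (Fin p) (Fin p) ℝ))

/-- the constant C_max -/
def CmaxV {m p : ℕ} (k : ℕ) (Do : Matrix (Fin m) (Fin p) ℝ) (Ea1 Malpha : ℝ) : ℝ :=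
  (2/7) * (Ea1 / Malpha) * (1 - 2 * mu k Do)

/-- The Basic signal model (Assumption 1 together with the generative mechanism):
J is uniform over size-k supports, α° is supported on J with white coefficients and signs,
and the noise is decorrelated from the coefficients and white.  Conditional expectations given
J are expressed as integrals over the events {J = S}. -/
structure IsBasicModel {m p : ℕ} (k : ℕ) {Ω : Type*} [MeasurableSpace Ω] (μ : Measure Ω)
    (Jv : Ω → Finset (Fin p)) (av : Ω → Fin p → ℝ) (ev : Ω → Fin m → ℝ)
    (Ea2 Ea1 Ee2 : ℝ) : Prop where
  prob : IsProbabilityMeasure μ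
  measJ : ∀ S : Finset (Fin p), MeasurableSet {ω | Jv ω = S}
  measa : ∀ i, Measurable fun ω => av ω i
  mease : ∀ i, Measurable fun ω => ev ω i
  Ea2_pos : 0 < Ea2
  Ea1_pos : 0 < Ea1
  unif : ∀ S : Finset (Fin p), S.card = k →
    μ {ω | Jv ω = S} = ((p.choose k : ℝ≥0∞))⁻¹
  support : ∀ᵐ ω ∂μ, ∀ i, i ∉ Jv ω → av ω i = 0
  coeffWhite : ∀ S : Finset (Fin p), S.card = k → ∀ i ∈ S, ∀ j ∈ S,
    ∫ ω in {ω | Jv ω = S}, av ω i * av ω j ∂μ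
      = (if i = j then Ea2 else 0) * (μ {ω | Jv ω = S}).toReal
  signWhite : ∀ S : Finset (Fin p), S.card = k → ∀ i ∈ S, ∀ j ∈ S,
    ∫ ω in {ω | Jv ω = S}, Real.sign (av ω i) * Real.sign (av ω j) ∂μ
      = (if i = j then 1 else 0) * (μ {ω | Jv ω = S}).toReal
  coeffSign : ∀ S : Finset (Fin p), S.card = k → ∀ i ∈ S, ∀ j ∈ S,
    ∫ ω in {ω | Jv ω = S}, av ω i * Real.sign (av ω j) ∂μ
      = (if i = j then Ea1 else 0) * (μ {ω | Jv ω = S}).toReal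
  noiseCoeff : ∀ S : Finset (Fin p), S.card = k → ∀ i : Fin m, ∀ j ∈ S,
    ∫ ω in {ω | Jv ω = S}, ev ω i * av ω j ∂μ = 0
  noiseSign : ∀ S : Finset (Fin p), S.card = k → ∀ i : Fin m, ∀ j ∈ S,
    ∫ ω in {ω | Jv ω = S}, ev ω i * Real.sign (av ω j) ∂μ = 0
  noiseWhite : ∀ S : Finset (Fin p), S.card = k → ∀ i j : Fin m,
    ∫ ω in {ω | Jv ω = S}, ev ω i * ev ω j ∂μ
      = (if i = j then Ee2 else 0) * (μ {ω | Jv ω = S}).toReal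

/-- The Bounded signal model (Assumption 2): almost sure lower bound on nonzero coefficients,
and almost sure ℓ² bounds on the coefficient vector and the noise. -/
structure IsBoundedModel {m p : ℕ} {Ω : Type*} [MeasurableSpace Ω] (μ : Measure Ω)
    (Jv : Ω → Finset (Fin p)) (av : Ω → Fin p → ℝ) (ev : Ω → Fin m → ℝ)
    (alphaMin Malpha Meps : ℝ) : Prop where
  alphaMin_pos : 0 < alphaMin
  Malpha_pos : 0 < Malpha
  coeffFloor : ∀ᵐ ω ∂μ, ∀ i ∈ Jv ω, alphaMin ≤ |av ω i|
  coeffBound : ∀ᵐ ω ∂μ, l2 (av ω) ≤ Malpha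
  noiseBound : ∀ᵐ ω ∂μ, l2 (ev ω) ≤ Meps

end

noncomputable section

lemma l2sq_nonneg {n : Type*} [Fintype n] (v : n → ℝ) : 0 ≤ l2sq v :=
  Finset.sum_nonneg fun i _ => sq_nonneg _

lemma l2_nonneg {n : Type*} [Fintype n] (v : n → ℝ) : 0 ≤ l2 v := Real.sqrt_nonneg _

lemma l2_sq {n : Type*} [Fintype n] (v : n → ℝ) : l2 v ^ 2 = l2sq v :=
  Real.sq_sqrt (l2sq_nonneg v)

lemma abs_dot_le {n : Type*} [Fintype n] (u v : n → ℝ) :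
    |∑ i, u i * v i| ≤ l2 u * l2 v := by
  have h := Finset.sum_mul_sq_le_sq_mul_sq Finset.univ u v
  have h2 : |∑ i, u i * v i| = Real.sqrt ((∑ i, u i * v i) ^ 2) :=
    (Real.sqrt_sq_eq_abs _).symm
  rw [h2]
  calc Real.sqrt ((∑ i, u i * v i) ^ 2) ≤ Real.sqrt (l2sq u * l2sq v) :=
        Real.sqrt_le_sqrt (by simpa [l2sq] using h)
    _ = l2 u * l2 v := Real.sqrt_mul (l2sq_nonneg u) _

lemma l2_add_le {n : Type*} [Fintype n] (u v : n → ℝ) :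
    l2 (fun i => u i + v i) ≤ l2 u + l2 v := by
  have hexp : l2sq (fun i => u i + v i) = l2sq u + 2 * (∑ i, u i * v i) + l2sq v := by
    simp only [l2sq, ← Finset.sum_add_distrib, Finset.mul_sum]
    apply Finset.sum_congr rfl; intro i _; ring
  have hcs : ∑ i, u i * v i ≤ l2 u * l2 v := le_trans (le_abs_self _) (abs_dot_le u v)
  have h1 : l2sq (fun i => u i + v i) ≤ (l2 u + l2 v) ^ 2 := by
    rw [hexp]; have := l2_sq u; have := l2_sq v; nlinarith
  calc l2 (fun i => u i + v i) ≤ Real.sqrt ((l2 u + l2 v)^2) := Real.sqrt_le_sqrt h1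
    _ = |l2 u + l2 v| := Real.sqrt_sq_eq_abs _
    _ = l2 u + l2 v := abs_of_nonneg (add_nonneg (l2_nonneg u) (l2_nonneg v))

lemma l2_mulVec_le {n q : Type*} [Fintype n] [Fintype q] (A : Matrix n q ℝ) (z : q → ℝ) :
    l2 (A.mulVec z) ≤ frob A * l2 z := by
  have h1 : l2sq (A.mulVec z) ≤ frobSq A * l2sq z := by
    simp only [l2sq, Matrix.mulVec, dotProduct, frobSq]
    rw [Finset.sum_mul]
    apply Finset.sum_le_sum; intro i _
    exact Finset.sum_mul_sq_le_sq_mul_sq Finset.univ _ _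
  calc l2 (A.mulVec z) ≤ Real.sqrt (frobSq A * l2sq z) := Real.sqrt_le_sqrt h1
    _ = frob A * l2 z := Real.sqrt_mul (Finset.sum_nonneg fun i _ =>
        Finset.sum_nonneg fun j _ => sq_nonneg _) _

lemma sign_mul_self' (b : ℝ) : Real.sign b * b = |b| := by
  rcases lt_trichotomy b 0 with h | h | h
  · rw [Real.sign_of_neg h, abs_of_neg h]; ring
  · simp [h]
  · rw [Real.sign_of_pos h, abs_of_pos h]; ring

lemma sign_eq_of_close {a b : ℝ} (h : |b - a| < |a|) : Real.sign b = Real.sign a := by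
  rcases lt_trichotomy a 0 with ha | ha | ha
  · have hb : b < 0 := by cases abs_cases (b - a) with
      | inl hc => cases abs_cases a with
        | inl hd => nlinarith
        | inr hd => nlinarith
      | inr hc => cases abs_cases a with
        | inl hd => nlinarith
        | inr hd => nlinarith
    rw [Real.sign_of_neg hb, Real.sign_of_neg ha]
  · rw [ha] at h; simp at h; linarith [abs_nonneg b]
  · have hb : 0 < b := by cases abs_cases (b - a) with
      | inl hc => cases abs_cases a with
        | inl hd => nlinarith
        | inr hd => nlinarith
      | inr hc => cases abs_cases a with
        | inl hd => nlinarith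
        | inr hd => nlinarith
    rw [Real.sign_of_pos hb, Real.sign_of_pos ha]

lemma abs_sign_of_ne {a : ℝ} (h : a ≠ 0) : |Real.sign a| = 1 := by
  rcases Real.sign_apply_eq_of_ne_zero a h with h1 | h1 <;> rw [h1] <;> norm_num

end
noncomputable section
namespace Stmt4Aux

variable {m p : ℕ}

lemma erase_sum_eq (J : Finset (Fin p)) (a : {x // x ∈ J}) (F : Fin p → ℝ) :
    ∑ b ∈ (Finset.univ : Finset {x // x ∈ J}).erase a, F b.1 = ∑ i ∈ J.erase a.1, F i := by
  have h1 : ∑ b ∈ (Finset.univ : Finset {x // x ∈ J}).erase a, F b.1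
      = (∑ b : {x // x ∈ J}, F b.1) - F a.1 :=
    Finset.sum_erase_eq_sub (Finset.mem_univ a)
  have h2 : ∑ i ∈ J.erase a.1, F i = (∑ i ∈ J, F i) - F a.1 :=
    Finset.sum_erase_eq_sub a.2
  rw [h1, h2, Finset.sum_coe_sort J F]

lemma gram_apply (D : Matrix (Fin m) (Fin p) ℝ) (J : Finset (Fin p)) (a b : {x // x ∈ J}) :
    gram D J a b = ∑ r, D r a.1 * D r b.1 := by
  simp [_root_.gram, colsub, Matrix.mul_apply, Matrix.transpose_apply]

lemma gram_symm (D : Matrix (Fin m) (Fin p) ℝ) (J : Finset (Fin p)) (a b : {x // x ∈ J}) :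
    gram D J a b = gram D J b a := by
  rw [gram_apply, gram_apply]
  exact Finset.sum_congr rfl fun r _ => mul_comm _ _

lemma gram_diag (D : Matrix (Fin m) (Fin p) ℝ) (hD : Oblique D) (J : Finset (Fin p))
    (a : {x // x ∈ J}) : gram D J a a = 1 := by
  rw [gram_apply]
  have := hD a.1
  unfold l2sq _root_.col at this
  rw [← this]
  exact Finset.sum_congr rfl fun r _ => (pow_two _).symm

lemma sum_erase_comm {n : Type*} [Fintype n] [DecidableEq n] (f : n → n → ℝ) :
    ∑ a, ∑ b ∈ Finset.univ.erase a, f a b = ∑ a, ∑ b ∈ Finset.univ.erase a, f b a := by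
  have key : ∀ g : n → n → ℝ, ∑ a, ∑ b ∈ Finset.univ.erase a, g a b
      = (∑ a, ∑ b, g a b) - ∑ a, g a a := by
    intro g
    rw [← Finset.sum_sub_distrib]
    exact Finset.sum_congr rfl fun a _ => Finset.sum_erase_eq_sub (Finset.mem_univ a)
  rw [key, key, Finset.sum_comm]

lemma l2sq_colsub (D : Matrix (Fin m) (Fin p) ℝ) (J : Finset (Fin p))
    (z : {x // x ∈ J} → ℝ) :
    l2sq ((colsub D J).mulVec z) = ∑ a, ∑ b, z a * z b * gram D J a b := by
  unfold l2sq
  have h1 : ∀ r, ((colsub D J).mulVec z) r ^ 2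
      = ∑ a, ∑ b, z a * z b * (colsub D J r a * colsub D J r b) := by
    intro r
    show ((colsub D J r) ⬝ᵥ z) ^ 2 = _
    rw [dotProduct, pow_two, Finset.sum_mul_sum]
    exact Finset.sum_congr rfl fun a _ => Finset.sum_congr rfl fun b _ => by ring
  rw [Finset.sum_congr rfl fun r _ => h1 r, Finset.sum_comm]
  refine Finset.sum_congr rfl fun a _ => ?_
  rw [Finset.sum_comm]
  refine Finset.sum_congr rfl fun b _ => ?_
  rw [gram_apply, ← Finset.mul_sum]
  rfl

lemma dot_gram (D : Matrix (Fin m) (Fin p) ℝ) (J : Finset (Fin p))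
    (z : {x // x ∈ J} → ℝ) :
    z ⬝ᵥ (gram D J).mulVec z = l2sq ((colsub D J).mulVec z) := by
  rw [l2sq_colsub, dotProduct]
  refine Finset.sum_congr rfl fun a _ => ?_
  show z a * ((gram D J a) ⬝ᵥ z) = _
  rw [dotProduct, Finset.mul_sum]
  exact Finset.sum_congr rfl fun b _ => by ring

lemma quad_bounds (D : Matrix (Fin m) (Fin p) ℝ) (J : Finset (Fin p)) (μb : ℝ)
    (hdiag : ∀ a : {x // x ∈ J}, gram D J a a = 1)
    (hrow : ∀ a : {x // x ∈ J}, ∑ b ∈ Finset.univ.erase a, |gram D J a b| ≤ μb)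
    (z : {x // x ∈ J} → ℝ) :
    (1 - μb) * (∑ a, z a ^ 2) ≤ l2sq ((colsub D J).mulVec z) ∧
      l2sq ((colsub D J).mulVec z) ≤ (1 + μb) * (∑ a, z a ^ 2) := by
  have hsplit : ∑ a, ∑ b, z a * z b * gram D J a b
      = (∑ a, z a ^ 2) + ∑ a, ∑ b ∈ Finset.univ.erase a, z a * z b * gram D J a b := by
    rw [← Finset.sum_add_distrib]
    refine Finset.sum_congr rfl fun a _ => ?_
    rw [← Finset.add_sum_erase _ _ (Finset.mem_univ a), hdiag a]
    ring
  have habs : |∑ a, ∑ b ∈ Finset.univ.erase a, z a * z b * gram D J a b|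
      ≤ μb * ∑ a, z a ^ 2 := by
    have step1 : |∑ a, ∑ b ∈ Finset.univ.erase a, z a * z b * gram D J a b|
        ≤ ∑ a, ∑ b ∈ Finset.univ.erase a,
            (|gram D J a b| * (z a ^ 2 / 2) + |gram D J a b| * (z b ^ 2 / 2)) := by
      refine le_trans (Finset.abs_sum_le_sum_abs _ _) (Finset.sum_le_sum fun a _ => ?_)
      refine le_trans (Finset.abs_sum_le_sum_abs _ _) (Finset.sum_le_sum fun b _ => ?_)
      have h1 : |z a * z b * gram D J a b| = |gram D J a b| * (|z a| * |z b|) := by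
        rw [abs_mul, abs_mul]; ring
      rw [h1, ← mul_add]
      refine mul_le_mul_of_nonneg_left ?_ (abs_nonneg _)
      nlinarith [sq_nonneg (|z a| - |z b|), sq_abs (z a), sq_abs (z b)]
    have step2 : ∑ a, ∑ b ∈ Finset.univ.erase a,
        (|gram D J a b| * (z a ^ 2 / 2) + |gram D J a b| * (z b ^ 2 / 2))
        ≤ μb * ∑ a, z a ^ 2 := by
      have hsplit2 : ∑ a, ∑ b ∈ Finset.univ.erase a,
          (|gram D J a b| * (z a ^ 2 / 2) + |gram D J a b| * (z b ^ 2 / 2))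
          = (∑ a, ∑ b ∈ Finset.univ.erase a, |gram D J a b| * (z a ^ 2 / 2))
            + ∑ a, ∑ b ∈ Finset.univ.erase a, |gram D J a b| * (z b ^ 2 / 2) := by
        rw [← Finset.sum_add_distrib]
        exact Finset.sum_congr rfl fun a _ => Finset.sum_add_distrib
      have hS1 : ∀ c : {x // x ∈ J} → ℝ, (∀ a, 0 ≤ c a) →
          ∑ a, ∑ b ∈ Finset.univ.erase a, |gram D J a b| * c a
            ≤ μb * ∑ a, c a := by
        intro c hc
        rw [Finset.mul_sum]
        refine Finset.sum_le_sum fun a _ => ?_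
        rw [← Finset.sum_mul]
        rw [mul_comm (μb) (c a)]
        exact mul_le_mul_of_nonneg_right (hrow a) (hc a) |>.trans_eq (mul_comm _ _)
      have hS2 : ∑ a, ∑ b ∈ Finset.univ.erase a, |gram D J a b| * (z b ^ 2 / 2)
          = ∑ a, ∑ b ∈ Finset.univ.erase a, |gram D J b a| * (z a ^ 2 / 2) :=
        sum_erase_comm _
      rw [hsplit2, hS2]
      have hS2' : ∑ a, ∑ b ∈ Finset.univ.erase a, |gram D J b a| * (z a ^ 2 / 2)
          = ∑ a, ∑ b ∈ Finset.univ.erase a, |gram D J a b| * (z a ^ 2 / 2) := by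
        refine Finset.sum_congr rfl fun a _ => Finset.sum_congr rfl fun b _ => ?_
        rw [gram_symm]
      rw [hS2']
      have h1 := hS1 (fun a => z a ^ 2 / 2) (fun a => by positivity)
      have h2 : μb * ∑ a, z a ^ 2 / 2 + μb * ∑ a, z a ^ 2 / 2 = μb * ∑ a, z a ^ 2 := by
        rw [← Finset.sum_div]; ring
      linarith
    exact le_trans step1 step2
  have h := abs_le.mp habs
  rw [l2sq_colsub, hsplit]
  constructor <;> nlinarith [h.1, h.2]

lemma gram_inv_facts (D : Matrix (Fin m) (Fin p) ℝ) (J : Finset (Fin p)) (μb : ℝ)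
    (hμb : μb < 1)
    (hdiag : ∀ a : {x // x ∈ J}, gram D J a a = 1)
    (hrow : ∀ a : {x // x ∈ J}, ∑ b ∈ Finset.univ.erase a, |gram D J a b| ≤ μb) :
    gram D J * theta D J = 1 ∧ theta D J * gram D J = 1 := by
  have hherm : (gram D J).IsHermitian := by
    unfold Matrix.IsHermitian
    ext a b
    simp only [Matrix.conjTranspose_apply, star_trivial]
    exact gram_symm D J b a
  have hpd : (gram D J).PosDef := by
    refine posDef_iff_dotProduct_mulVec.mpr ⟨hherm, fun z hz => ?_⟩
    have hstar : star z = z := by funext a; simp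
    rw [hstar, dot_gram]
    obtain ⟨a, ha⟩ := Function.ne_iff.mp hz
    have hpos : 0 < ∑ a, z a ^ 2 := by
      have h1 : 0 < z a ^ 2 := by rw [← sq_abs]; exact pow_pos (abs_pos.mpr ha) 2
      have h2 : z a ^ 2 ≤ ∑ b, z b ^ 2 :=
        Finset.single_le_sum (fun b _ => sq_nonneg (z b)) (Finset.mem_univ a)
      linarith
    have := (quad_bounds D J μb hdiag hrow z).1
    nlinarith
  have hdet : IsUnit (gram D J).det := isUnit_iff_ne_zero.mpr hpd.det_pos.ne'
  exact ⟨Matrix.mul_nonsing_inv _ hdet, Matrix.nonsing_inv_mul _ hdet⟩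

lemma theta_linf_bound (D : Matrix (Fin m) (Fin p) ℝ) (J : Finset (Fin p)) (μb : ℝ)
    (hμb : μb < 1)
    (hdiag : ∀ a : {x // x ∈ J}, gram D J a a = 1)
    (hrow : ∀ a : {x // x ∈ J}, ∑ b ∈ Finset.univ.erase a, |gram D J a b| ≤ μb)
    (zv : {x // x ∈ J} → ℝ) (C : ℝ) (hC : ∀ a, |zv a| ≤ C) :
    ∀ a, |(theta D J).mulVec zv a| ≤ C / (1 - μb) := by
  have hμb1 : (0:ℝ) < 1 - μb := by linarith
  obtain ⟨hGi1, hGi2⟩ := gram_inv_facts D J μb hμb hdiag hrow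
  set y := (theta D J).mulVec zv with hy
  have hGy : (gram D J).mulVec y = zv := by
    rw [hy, Matrix.mulVec_mulVec, hGi1, Matrix.one_mulVec]
  intro a
  obtain ⟨a0, _, hmax⟩ := Finset.exists_max_image (Finset.univ : Finset {x // x ∈ J})
    (fun b => |y b|) ⟨a, Finset.mem_univ a⟩
  have h1 : zv a0 = y a0 + ∑ b ∈ Finset.univ.erase a0, gram D J a0 b * y b := by
    rw [← hGy]
    show (gram D J a0) ⬝ᵥ y = _
    rw [dotProduct, ← Finset.add_sum_erase _ _ (Finset.mem_univ a0), hdiag a0, one_mul]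
  have h2 : |y a0| ≤ |zv a0| + μb * |y a0| := by
    have h3 : y a0 = zv a0 - ∑ b ∈ Finset.univ.erase a0, gram D J a0 b * y b := by
      rw [h1]; ring
    have h4 : |∑ b ∈ Finset.univ.erase a0, gram D J a0 b * y b| ≤ μb * |y a0| := by
      refine le_trans (Finset.abs_sum_le_sum_abs _ _) ?_
      have h5 : ∑ b ∈ Finset.univ.erase a0, |gram D J a0 b * y b|
          ≤ ∑ b ∈ Finset.univ.erase a0, |gram D J a0 b| * |y a0| := by
        refine Finset.sum_le_sum fun b _ => ?_
        rw [abs_mul]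
        exact mul_le_mul_of_nonneg_left (hmax b (Finset.mem_univ b)) (abs_nonneg _)
      rw [← Finset.sum_mul] at h5
      exact le_trans h5 (mul_le_mul_of_nonneg_right (hrow a0) (abs_nonneg _))
    calc |y a0| = |zv a0 - (zv a0 - y a0)| := by rw [sub_sub_cancel]
      _ ≤ |zv a0| + |zv a0 - y a0| := abs_sub _ _
      _ = |zv a0| + |∑ b ∈ Finset.univ.erase a0, gram D J a0 b * y b| := by
          rw [h3]; ring_nf
      _ ≤ |zv a0| + μb * |y a0| := by linarith [h4]
  have h6 : |y a0| ≤ C / (1 - μb) := by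
    rw [le_div_iff₀ hμb1]
    have := hC a0
    nlinarith
  exact le_trans (hmax a (Finset.mem_univ a)) h6
lemma mulVec_colsub_eq (D : Matrix (Fin m) (Fin p) ℝ) (J : Finset (Fin p))
    (v : Fin p → ℝ) (hv : ∀ i ∉ J, v i = 0) :
    (colsub D J).mulVec (fun a => v a.1) = D.mulVec v := by
  funext r
  show (colsub D J r) ⬝ᵥ (fun a => v a.1) = (D r) ⬝ᵥ v
  rw [dotProduct, dotProduct]
  rw [show (∑ a : {x // x ∈ J}, colsub D J r a * v a.1) = ∑ i ∈ J, D r i * v i from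
    Finset.sum_coe_sort J (fun i => D r i * v i)]
  exact Finset.sum_subset (Finset.subset_univ J) (fun i _ hi => by rw [hv i hi, mul_zero])

lemma sum_eq_subtype (J : Finset (Fin p)) (f : Fin p → ℝ) (hf : ∀ i ∉ J, f i = 0) :
    ∑ i, f i = ∑ a : {x // x ∈ J}, f a.1 := by
  rw [Finset.sum_coe_sort J f]
  exact (Finset.sum_subset (Finset.subset_univ J) (fun i _ hi => hf i hi)).symm

lemma dot_mulVec_swap {n q : Type*} [Fintype n] [Fintype q] (M : Matrix n q ℝ)
    (v : n → ℝ) (z : q → ℝ) :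
    ∑ r, v r * M.mulVec z r = ∑ i, (∑ r, M r i * v r) * z i := by
  have h1 : ∀ r, v r * M.mulVec z r = ∑ i, M r i * v r * z i := by
    intro r
    show v r * (M r ⬝ᵥ z) = _
    rw [dotProduct, Finset.mul_sum]
    exact Finset.sum_congr rfl fun i _ => by ring
  rw [Finset.sum_congr rfl fun r _ => h1 r, Finset.sum_comm]
  exact Finset.sum_congr rfl fun i _ => (Finset.sum_mul _ _ _).symm

lemma hAT_apply (D : Matrix (Fin m) (Fin p) ℝ) (J : Finset (Fin p)) (v : Fin m → ℝ)
    (a : {x // x ∈ J}) : ((colsub D J)ᵀ).mulVec v a = ∑ r, D r a.1 * v r := by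
  show ((colsub D J)ᵀ a) ⬝ᵥ v = _
  rw [dotProduct]
  rfl

theorem master (k : ℕ) (D : Matrix (Fin m) (Fin p) ℝ) (hD : Oblique D)
    (J : Finset (Fin p)) (hJ : J.card = k)
    (αo : Fin p → ℝ) (hsupp0 : ∀ i ∉ J, αo i = 0)
    (alphaMin : ℝ) (hαmin : 0 < alphaMin) (hfloor : ∀ i ∈ J, alphaMin ≤ |αo i|)
    (x : Fin m → ℝ)
    (lam : ℝ) (hlam : 0 < lam) (hlamA : lam ≤ alphaMin / 2)
    (μb : ℝ) (hμb : μb < 1/2) (hμb0 : 0 ≤ μb)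
    (hcoh : ∀ J' : Finset (Fin p), J'.card ≤ k → ∀ j ∉ J',
       ∑ i ∈ J', |∑ r, D r i * D r j| ≤ μb)
    (E : ℝ) (hE : ∀ j : Fin p, |∑ r, D r j * (x r - D.mulVec αo r)| ≤ E)
    (hElam : E < lam * (1 - 2*μb)) :
    (∀ a : Fin p → ℝ, a ≠ alphaHat lam x D J (sgnv αo) →
      lasso lam x D (alphaHat lam x D J (sgnv αo)) < lasso lam x D a) ∧
    (∀ i, Real.sign (alphaHat lam x D J (sgnv αo) i) = Real.sign (αo i)) ∧
    fobj lam x D = phi lam x D J (sgnv αo) := by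
  have hμb1 : (0:ℝ) < 1 - μb := by linarith
  have hdiag : ∀ a : {x // x ∈ J}, gram D J a a = 1 := gram_diag D hD J
  have hrow : ∀ a : {x // x ∈ J}, ∑ b ∈ Finset.univ.erase a, |gram D J a b| ≤ μb := by
    intro a
    have hcard : (J.erase a.1).card ≤ k :=
      le_trans (Finset.card_le_card (Finset.erase_subset _ _)) (le_of_eq hJ)
    have h0 := hcoh (J.erase a.1) hcard a.1 (Finset.notMem_erase _ _)
    have h1 : ∑ b ∈ Finset.univ.erase a, |gram D J a b|
        = ∑ i ∈ J.erase a.1, |∑ r, D r i * D r a.1| := by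
      rw [← erase_sum_eq J a (fun i => |∑ r, D r i * D r a.1|)]
      refine Finset.sum_congr rfl fun b _ => ?_
      rw [gram_apply]
      congr 1
      exact Finset.sum_congr rfl fun r _ => mul_comm _ _
    rw [h1]; exact h0
  have hGi := gram_inv_facts D J μb (by linarith) hdiag hrow
  have hαne : ∀ a : {x // x ∈ J}, αo a.1 ≠ 0 := fun a h => by
    have := hfloor a.1 a.2; rw [h, abs_zero] at this; linarith
  have hsabs : ∀ a : {x // x ∈ J}, |sgnv αo a.1| = 1 := fun a => abs_sign_of_ne (hαne a)
  -- the candidate on J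
  set wv : {x // x ∈ J} → ℝ :=
    fun a => ((colsub D J)ᵀ).mulVec x a - lam * sgnv αo a.1 with hwv
  have hβdef : ∀ (i : Fin p) (h : i ∈ J),
      alphaHat lam x D J (sgnv αo) i = (theta D J).mulVec wv ⟨i, h⟩ := by
    intro i h
    unfold alphaHat
    rw [dif_pos h]
    have h2 : (pinv D J).mulVec x = (theta D J).mulVec (((colsub D J)ᵀ).mulVec x) := by
      unfold pinv; rw [← Matrix.mulVec_mulVec]
    have h3 : wv = ((colsub D J)ᵀ).mulVec x - lam • (fun a : {x // x ∈ J} => sgnv αo a.1) := by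
      funext a; simp [hwv, Pi.sub_apply]
    rw [h3, Matrix.mulVec_sub, Matrix.mulVec_smul, h2]
    simp [Pi.sub_apply]
  have hhat0 : ∀ i ∉ J, alphaHat lam x D J (sgnv αo) i = 0 := by
    intro i h; unfold alphaHat; rw [dif_neg h]
  have hβfun : (fun a : {x // x ∈ J} => alphaHat lam x D J (sgnv αo) a.1)
      = (theta D J).mulVec wv := funext fun a => by rw [hβdef a.1 a.2]
  have hGβ : (gram D J).mulVec (fun a : {x // x ∈ J} => alphaHat lam x D J (sgnv αo) a.1)
      = wv := by
    rw [hβfun, Matrix.mulVec_mulVec, hGi.1, Matrix.one_mulVec]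
  -- Gram applied to the error on J
  have key1 : (gram D J).mulVec ((fun a : {x // x ∈ J} => alphaHat lam x D J (sgnv αo) a.1)
        - (fun a => αo a.1))
      = fun a => (∑ r, D r a.1 * (x r - D.mulVec αo r)) - lam * sgnv αo a.1 := by
    rw [Matrix.mulVec_sub, hGβ]
    funext a
    have hGα : (gram D J).mulVec (fun a : {x // x ∈ J} => αo a.1) a
        = ∑ r, D r a.1 * (D.mulVec αo r) := by
      unfold _root_.gram
      rw [← Matrix.mulVec_mulVec, mulVec_colsub_eq D J αo hsupp0]
      exact hAT_apply D J _ a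
    have hsub : ∑ r, D r a.1 * (x r - D.mulVec αo r)
        = (∑ r, D r a.1 * x r) - ∑ r, D r a.1 * (D.mulVec αo r) := by
      rw [← Finset.sum_sub_distrib]
      exact Finset.sum_congr rfl fun r _ => by ring
    simp only [Pi.sub_apply]
    rw [hGα, hsub, hwv]
    simp only [hAT_apply D J x a]
    ring
  have hδeq : ((fun a : {x // x ∈ J} => alphaHat lam x D J (sgnv αo) a.1) - (fun a => αo a.1))
      = (theta D J).mulVec (fun a => (∑ r, D r a.1 * (x r - D.mulVec αo r)) - lam * sgnv αo a.1) := by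
    calc (fun a : {x // x ∈ J} => alphaHat lam x D J (sgnv αo) a.1) - (fun a => αo a.1)
        = (1 : Matrix {x // x ∈ J} {x // x ∈ J} ℝ).mulVec _ := (Matrix.one_mulVec _).symm
      _ = ((theta D J) * (gram D J)).mulVec _ := by rw [hGi.2]
      _ = (theta D J).mulVec ((gram D J).mulVec _) := (Matrix.mulVec_mulVec _ _ _).symm
      _ = _ := by rw [key1]
  have hδbound : ∀ a : {x // x ∈ J},
      |alphaHat lam x D J (sgnv αo) a.1 - αo a.1| ≤ (E + lam) / (1 - μb) := by
    have hw : ∀ a : {x // x ∈ J},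
        |(∑ r, D r a.1 * (x r - D.mulVec αo r)) - lam * sgnv αo a.1| ≤ E + lam := by
      intro a
      calc |(∑ r, D r a.1 * (x r - D.mulVec αo r)) - lam * sgnv αo a.1|
          ≤ |∑ r, D r a.1 * (x r - D.mulVec αo r)| + |lam * sgnv αo a.1| := abs_sub _ _
        _ ≤ E + lam := by
            rw [abs_mul, hsabs a, mul_one, abs_of_pos hlam]
            exact add_le_add_left (hE a.1) lam
    intro a
    have h1 := theta_linf_bound D J μb (by linarith) hdiag hrow _ (E + lam) hw a
    rw [← hδeq] at h1
    exact h1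
  have hEl : (E + lam) / (1 - μb) < alphaMin := by
    rw [div_lt_iff₀ hμb1]
    nlinarith
  have hsignJ : ∀ (i : Fin p), i ∈ J →
      Real.sign (alphaHat lam x D J (sgnv αo) i) = Real.sign (αo i) := by
    intro i h
    apply sign_eq_of_close
    calc |alphaHat lam x D J (sgnv αo) i - αo i| ≤ (E + lam) / (1 - μb) := hδbound ⟨i, h⟩
      _ < alphaMin := hEl
      _ ≤ |αo i| := hfloor i h
  have hshat : ∀ (i : Fin p), i ∈ J →
      sgnv αo i * alphaHat lam x D J (sgnv αo) i = |alphaHat lam x D J (sgnv αo) i| := by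
    intro i h
    have : sgnv αo i = Real.sign (alphaHat lam x D J (sgnv αo) i) := (hsignJ i h).symm
    rw [this]
    exact sign_mul_self' _
  -- residual
  set u : Fin m → ℝ := fun r => x r - D.mulVec (alphaHat lam x D J (sgnv αo)) r with hu
  have hDhat : D.mulVec (alphaHat lam x D J (sgnv αo))
      = (colsub D J).mulVec (fun a => alphaHat lam x D J (sgnv αo) a.1) :=
    (mulVec_colsub_eq D J _ hhat0).symm
  have hures : ∀ r, u r = (x r - D.mulVec αo r)
      - (colsub D J).mulVec ((fun a : {x // x ∈ J} => alphaHat lam x D J (sgnv αo) a.1)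
          - (fun a => αo a.1)) r := by
    intro r
    rw [hu, Matrix.mulVec_sub, mulVec_colsub_eq D J αo hsupp0, hDhat]
    simp only [Pi.sub_apply]
    ring
  have hcJ : ∀ (i : Fin p), i ∈ J → ∑ r, D r i * u r = lam * sgnv αo i := by
    intro i h
    have h1 : ∑ r, D r i * u r = (∑ r, D r i * (x r - D.mulVec αo r))
        - ((gram D J).mulVec ((fun a : {x // x ∈ J} => alphaHat lam x D J (sgnv αo) a.1)
            - (fun a => αo a.1))) ⟨i, h⟩ := by
      have h2 : ((gram D J).mulVec ((fun a : {x // x ∈ J} => alphaHat lam x D J (sgnv αo) a.1)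
          - (fun a => αo a.1))) ⟨i, h⟩
          = ∑ r, D r i * ((colsub D J).mulVec ((fun a : {x // x ∈ J} =>
              alphaHat lam x D J (sgnv αo) a.1) - (fun a => αo a.1)) r) := by
        unfold _root_.gram
        rw [← Matrix.mulVec_mulVec]
        exact hAT_apply D J _ ⟨i, h⟩
      rw [h2, ← Finset.sum_sub_distrib]
      refine Finset.sum_congr rfl fun r _ => ?_
      rw [hures r]
      ring
    rw [h1, key1]
    ring
  set δv : {x // x ∈ J} → ℝ := ((fun a : {x // x ∈ J} => alphaHat lam x D J (sgnv αo) a.1)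
      - (fun a : {x // x ∈ J} => αo a.1)) with hδv
  have hδb2 : ∀ a : {x // x ∈ J}, |δv a| ≤ (E + lam) / (1 - μb) := fun a => hδbound a
  have hcoff : ∀ j ∉ J, |∑ r, D r j * u r| < lam := by
    intro j hj
    have h1 : ∑ r, D r j * u r = (∑ r, D r j * (x r - D.mulVec αo r))
        - ∑ a : {x // x ∈ J}, (∑ r, colsub D J r a * D r j) * δv a := by
      have h2 : ∑ r, D r j * u r = (∑ r, D r j * (x r - D.mulVec αo r))
          - ∑ r, D r j * ((colsub D J).mulVec δv) r := by
        rw [hδv, ← Finset.sum_sub_distrib]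
        refine Finset.sum_congr rfl fun r _ => ?_
        rw [hures r]
        ring
      have h3 : ∑ r, D r j * ((colsub D J).mulVec δv) r
          = ∑ a : {x // x ∈ J}, (∑ r, colsub D J r a * D r j) * δv a := by
        have := dot_mulVec_swap (colsub D J) (fun r => D r j) δv
        simpa using this
      rw [h2, h3]
    have h4 : |∑ a : {x // x ∈ J}, (∑ r, colsub D J r a * D r j) * δv a|
        ≤ μb * ((E + lam) / (1 - μb)) := by
      refine le_trans (Finset.abs_sum_le_sum_abs _ _) ?_
      have h5 : ∀ a : {x // x ∈ J}, |(∑ r, colsub D J r a * D r j) * δv a|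
          ≤ |∑ r, D r a.1 * D r j| * ((E + lam) / (1 - μb)) := by
        intro a
        rw [abs_mul]
        refine mul_le_mul (le_of_eq (by rfl)) (hδb2 a) (abs_nonneg _) (abs_nonneg _)
      refine le_trans (Finset.sum_le_sum fun a _ => h5 a) ?_
      rw [← Finset.sum_mul]
      have hE0 : 0 ≤ E := le_trans (abs_nonneg _) (hE j)
      refine mul_le_mul_of_nonneg_right ?_ (div_nonneg (by linarith) (le_of_lt hμb1))
      have h6 : ∑ a : {x // x ∈ J}, |∑ r, D r a.1 * D r j|
          = ∑ i ∈ J, |∑ r, D r i * D r j| :=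
        Finset.sum_coe_sort J (fun i => |∑ r, D r i * D r j|)
      rw [h6]
      exact hcoh J (le_of_eq hJ) j hj
    have h7 := hE j
    have h8 : μb * ((E + lam) / (1 - μb)) = (μb * (E + lam)) / (1 - μb) := by ring
    have h9 : μb * (E + lam) / (1 - μb) < lam - E := by
      rw [div_lt_iff₀ hμb1]
      nlinarith
    calc |∑ r, D r j * u r| ≤ |∑ r, D r j * (x r - D.mulVec αo r)|
          + |∑ a : {x // x ∈ J}, (∑ r, colsub D J r a * D r j) * δv a| := by
          rw [h1]; exact abs_sub _ _
      _ < E + (lam - E) := by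
          have := lt_of_le_of_lt (le_trans h4 (le_of_eq h8)) h9
          exact add_lt_add_of_le_of_lt h7 this
      _ = lam := by ring
  have hcall : ∀ j : Fin p, |∑ r, D r j * u r| ≤ lam := by
    intro j
    by_cases h : j ∈ J
    · rw [hcJ j h, abs_mul, abs_of_pos hlam, hsabs ⟨j, h⟩, mul_one]
    · exact le_of_lt (hcoff j h)
  -- the key expansion of the Lasso objective
  have keyIdent : ∀ a : Fin p → ℝ, lasso lam x D a
      = lasso lam x D (alphaHat lam x D J (sgnv αo))
        + (1/2) * l2sq (D.mulVec (a - alphaHat lam x D J (sgnv αo)))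
        + ∑ i, (lam * |a i| - (∑ r, D r i * u r) * a i) := by
    intro a
    set g : Fin p → ℝ := a - alphaHat lam x D J (sgnv αo) with hg
    have hresid : ∀ r, x r - D.mulVec a r = u r - D.mulVec g r := by
      intro r
      rw [hg, Matrix.mulVec_sub]
      simp only [Pi.sub_apply, hu]
      ring
    have hexpand : l2sq (fun r => x r - D.mulVec a r)
        = l2sq u - 2 * ∑ r, u r * D.mulVec g r + l2sq (D.mulVec g) := by
      have h1 : ∀ r, (x r - D.mulVec a r)^2
          = u r^2 - 2 * (u r * D.mulVec g r) + (D.mulVec g r)^2 := by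
        intro r; rw [hresid r]; ring
      unfold l2sq
      rw [Finset.sum_congr rfl fun r _ => h1 r]
      rw [Finset.sum_add_distrib, Finset.sum_sub_distrib, ← Finset.mul_sum]
    have hswap : ∑ r, u r * D.mulVec g r = ∑ i, (∑ r, D r i * u r) * g i :=
      dot_mulVec_swap D u g
    have hzero : ∀ i, lam * |alphaHat lam x D J (sgnv αo) i|
        - (∑ r, D r i * u r) * alphaHat lam x D J (sgnv αo) i = 0 := by
      intro i
      by_cases h : i ∈ J
      · rw [hcJ i h, mul_assoc, hshat i h]
        ring
      · rw [hhat0 i h]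
        simp
    have hzs : ∑ i, (lam * |alphaHat lam x D J (sgnv αo) i|
        - (∑ r, D r i * u r) * alphaHat lam x D J (sgnv αo) i) = 0 :=
      Finset.sum_eq_zero fun i _ => hzero i
    have hgi : ∀ i, g i = a i - alphaHat lam x D J (sgnv αo) i := fun i => rfl
    unfold lasso l1
    rw [hexpand, hswap]
    have hsplit : ∑ i, (∑ r, D r i * u r) * g i
        = ∑ i, (∑ r, D r i * u r) * a i
          - ∑ i, (∑ r, D r i * u r) * alphaHat lam x D J (sgnv αo) i := by
      rw [← Finset.sum_sub_distrib]
      refine Finset.sum_congr rfl fun i _ => ?_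
      rw [hgi i]; ring
    rw [hsplit]
    have e1 : ∑ i, (lam * |a i| - (∑ r, D r i * u r) * a i)
        = lam * (∑ i, |a i|) - ∑ i, (∑ r, D r i * u r) * a i := by
      rw [Finset.mul_sum, ← Finset.sum_sub_distrib]
    have e2 : lam * (∑ i, |alphaHat lam x D J (sgnv αo) i|)
        = ∑ i, (∑ r, D r i * u r) * alphaHat lam x D J (sgnv αo) i := by
      rw [Finset.mul_sum, ← sub_eq_zero, ← Finset.sum_sub_distrib]
      exact Finset.sum_eq_zero fun i _ => hzero i
    have hluu : l2sq (fun r => x r - D.mulVec (alphaHat lam x D J (sgnv αo)) r) = l2sq u := rfl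
    rw [hluu, e1]
    linarith [e2]
  have hnonneg : ∀ (a : Fin p → ℝ) (i : Fin p), 0 ≤ lam * |a i| - (∑ r, D r i * u r) * a i := by
    intro a i
    have h1 : (∑ r, D r i * u r) * a i ≤ |∑ r, D r i * u r| * |a i| := by
      rw [← abs_mul]; exact le_abs_self _
    have h2 : |∑ r, D r i * u r| * |a i| ≤ lam * |a i| :=
      mul_le_mul_of_nonneg_right (hcall i) (abs_nonneg _)
    linarith
  have hmin : ∀ a : Fin p → ℝ,
      lasso lam x D (alphaHat lam x D J (sgnv αo)) ≤ lasso lam x D a := by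
    intro a
    rw [keyIdent a]
    have h1 := l2sq_nonneg (D.mulVec (a - alphaHat lam x D J (sgnv αo)))
    have h2 := Finset.sum_nonneg (fun i (_ : i ∈ Finset.univ) => hnonneg a i)
    linarith
  have hstrict : ∀ a : Fin p → ℝ, a ≠ alphaHat lam x D J (sgnv αo) →
      lasso lam x D (alphaHat lam x D J (sgnv αo)) < lasso lam x D a := by
    intro a hne
    rw [keyIdent a]
    have hsumn := Finset.sum_nonneg (fun i (_ : i ∈ Finset.univ) => hnonneg a i)
    by_cases hoff : ∀ j ∉ J, a j = 0
    · have hgsupp : ∀ i ∉ J, (a - alphaHat lam x D J (sgnv αo)) i = 0 := fun i h => by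
        simp [Pi.sub_apply, hoff i h, hhat0 i h]
      have hv : D.mulVec (a - alphaHat lam x D J (sgnv αo))
          = (colsub D J).mulVec (fun b : {x // x ∈ J} =>
              (a - alphaHat lam x D J (sgnv αo)) b.1) :=
        (mulVec_colsub_eq D J _ hgsupp).symm
      obtain ⟨i, hi⟩ := Function.ne_iff.mp hne
      have hiJ : i ∈ J := by
        by_contra h
        exact hi (by rw [hoff i h, hhat0 i h])
      have hpos : 0 < ∑ b : {x // x ∈ J}, ((a - alphaHat lam x D J (sgnv αo)) b.1)^2 := by
        have h1 : 0 < ((a - alphaHat lam x D J (sgnv αo)) i)^2 := by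
          rw [← sq_abs]
          refine pow_pos (abs_pos.mpr ?_) 2
          simp only [Pi.sub_apply, sub_ne_zero]
          exact hi
        have h2 : ((a - alphaHat lam x D J (sgnv αo)) i)^2
            ≤ ∑ b : {x // x ∈ J}, ((a - alphaHat lam x D J (sgnv αo)) b.1)^2 :=
          Finset.single_le_sum (f := fun b : {x // x ∈ J} =>
            ((a - alphaHat lam x D J (sgnv αo)) b.1)^2)
            (fun b _ => sq_nonneg _) (Finset.mem_univ ⟨i, hiJ⟩)
        linarith
      have hq := (quad_bounds D J μb hdiag hrow (fun b : {x // x ∈ J} =>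
        (a - alphaHat lam x D J (sgnv αo)) b.1)).1
      have h3 : 0 < l2sq (D.mulVec (a - alphaHat lam x D J (sgnv αo))) := by
        rw [hv]
        nlinarith
      linarith
    · push_neg at hoff
      obtain ⟨j, hj, haj⟩ := hoff
      have hterm : 0 < lam * |a j| - (∑ r, D r j * u r) * a j := by
        have h1 : (∑ r, D r j * u r) * a j ≤ |∑ r, D r j * u r| * |a j| := by
          rw [← abs_mul]; exact le_abs_self _
        have h2 : |∑ r, D r j * u r| * |a j| < lam * |a j| :=
          mul_lt_mul_of_pos_right (hcoff j hj) (abs_pos.mpr haj)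
        linarith
      have hsum : 0 < ∑ i, (lam * |a i| - (∑ r, D r i * u r) * a i) := by
        have h5 := Finset.single_le_sum (f := fun i => lam * |a i| - (∑ r, D r i * u r) * a i)
          (fun i _ => hnonneg a i) (Finset.mem_univ j)
        beta_reduce at h5
        linarith
      have h1 := l2sq_nonneg (D.mulVec (a - alphaHat lam x D J (sgnv αo)))
      linarith
  -- value at the candidate equals phi
  have hphi : lasso lam x D (alphaHat lam x D J (sgnv αo)) = phi lam x D J (sgnv αo) := by
    set βf : {x // x ∈ J} → ℝ := fun a => alphaHat lam x D J (sgnv αo) a.1 with hβf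
    have hl1 : l1 (alphaHat lam x D J (sgnv αo)) = ∑ a : {x // x ∈ J}, sgnv αo a.1 * βf a := by
      unfold l1
      rw [sum_eq_subtype J _ (fun i h => by rw [hhat0 i h, abs_zero])]
      exact Finset.sum_congr rfl fun a _ => (hshat a.1 a.2).symm
    have hxAβ : ∑ r, x r * (colsub D J).mulVec βf r
        = ∑ a : {x // x ∈ J}, (((colsub D J)ᵀ).mulVec x a) * βf a := by
      rw [dot_mulVec_swap (colsub D J) x βf]
      refine Finset.sum_congr rfl fun a _ => ?_
      rw [hAT_apply]
      rfl
    have hAβ2 : l2sq ((colsub D J).mulVec βf) = ∑ a : {x // x ∈ J}, wv a * βf a := by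
      have h1 : l2sq ((colsub D J).mulVec βf)
          = ∑ r, ((colsub D J).mulVec βf) r * ((colsub D J).mulVec βf) r := by
        unfold l2sq
        exact Finset.sum_congr rfl fun r _ => pow_two _
      rw [h1, dot_mulVec_swap (colsub D J) ((colsub D J).mulVec βf) βf]
      refine Finset.sum_congr rfl fun a _ => ?_
      have h2 : (∑ r, colsub D J r a * ((colsub D J).mulVec βf) r)
          = ((gram D J).mulVec βf) a := by
        unfold _root_.gram
        rw [← Matrix.mulVec_mulVec]
        rw [hAT_apply]
        rfl
      rw [h2, hGβ]
    have hl2u : l2sq u = l2sq x - 2 * ∑ a : {x // x ∈ J}, (((colsub D J)ᵀ).mulVec x a) * βf a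
        + ∑ a : {x // x ∈ J}, wv a * βf a := by
      have h1 : ∀ r, u r ^ 2 = x r ^ 2 - 2 * (x r * (colsub D J).mulVec βf r)
          + ((colsub D J).mulVec βf r)^2 := by
        intro r
        have : u r = x r - (colsub D J).mulVec βf r := by
          rw [hu]; simp only; rw [hDhat]
        rw [this]; ring
      have h2 : l2sq u = l2sq x - 2 * ∑ r, x r * (colsub D J).mulVec βf r
          + l2sq ((colsub D J).mulVec βf) := by
        unfold l2sq
        rw [Finset.sum_congr rfl fun r _ => h1 r]
        rw [Finset.sum_add_distrib, Finset.sum_sub_distrib, ← Finset.mul_sum]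
      rw [h2, hxAβ, hAβ2]
    have hβθ : βf = (theta D J).mulVec wv := hβfun
    have hsum2 : ∑ a : {x // x ∈ J}, wv a * βf a
        = ∑ a : {x // x ∈ J}, ∑ b : {x // x ∈ J},
            (((colsub D J)ᵀ).mulVec x a - lam * sgnv αo a.1) * theta D J a b
              * (((colsub D J)ᵀ).mulVec x b - lam * sgnv αo b.1) := by
      refine Finset.sum_congr rfl fun a _ => ?_
      rw [hβθ]
      show wv a * ((theta D J a) ⬝ᵥ wv) = _
      rw [dotProduct, Finset.mul_sum]
      refine Finset.sum_congr rfl fun b _ => ?_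
      rw [hwv]
      ring
    have hwsum : ∑ a : {x // x ∈ J}, (((colsub D J)ᵀ).mulVec x a) * βf a
        - lam * ∑ a : {x // x ∈ J}, sgnv αo a.1 * βf a
        = ∑ a : {x // x ∈ J}, wv a * βf a := by
      rw [Finset.mul_sum, ← Finset.sum_sub_distrib]
      refine Finset.sum_congr rfl fun a _ => ?_
      rw [hwv]
      ring
    unfold lasso phi
    have hluu : l2sq (fun r => x r - D.mulVec (alphaHat lam x D J (sgnv αo)) r) = l2sq u := rfl
    rw [hluu, hl2u, hl1, ← hsum2]
    linarith [hwsum]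
  have hlasso_nonneg : ∀ a : Fin p → ℝ, 0 ≤ lasso lam x D a := by
    intro a
    unfold lasso
    have h1 := l2sq_nonneg (fun i => x i - D.mulVec a i)
    have h2 : 0 ≤ l1 a := Finset.sum_nonneg fun i _ => abs_nonneg _
    have := mul_nonneg (le_of_lt hlam) h2
    linarith
  have hfobj : fobj lam x D = lasso lam x D (alphaHat lam x D J (sgnv αo)) := by
    refine le_antisymm ?_ (le_ciInf hmin)
    exact ciInf_le ⟨0, by rintro y ⟨a, rfl⟩; exact hlasso_nonneg a⟩ _
  refine ⟨hstrict, ?_, hfobj.trans hphi⟩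
  intro i
  by_cases h : i ∈ J
  · exact hsignJ i h
  · rw [hhat0 i h, hsupp0 i h]

lemma col_dot_le_one (D : Matrix (Fin m) (Fin p) ℝ) (hD : Oblique D) (i j : Fin p) :
    |∑ r, D r i * D r j| ≤ 1 := by
  have h := abs_dot_le (_root_.col D i) (_root_.col D j)
  have h1 : l2 (_root_.col D i) = 1 := by unfold l2; rw [hD i, Real.sqrt_one]
  have h2 : l2 (_root_.col D j) = 1 := by unfold l2; rw [hD j, Real.sqrt_one]
  rw [h1, h2, mul_one] at h
  exact h

lemma mu_bddAbove (k : ℕ) (D : Matrix (Fin m) (Fin p) ℝ) (hD : Oblique D) :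
    BddAbove {t : ℝ | ∃ J : Finset (Fin p), J.card ≤ k ∧ ∃ j, j ∉ J ∧
      t = ∑ i ∈ J, |∑ r, D r i * D r j|} := by
  refine ⟨k, ?_⟩
  rintro t ⟨J', hc, j, hj, rfl⟩
  calc ∑ i ∈ J', |∑ r, D r i * D r j| ≤ ∑ _i ∈ J', (1:ℝ) :=
        Finset.sum_le_sum fun i _ => col_dot_le_one D hD i j
    _ = J'.card := by simp
    _ ≤ k := by exact_mod_cast hc

lemma mu_le (k : ℕ) (D : Matrix (Fin m) (Fin p) ℝ) (hD : Oblique D)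
    (J' : Finset (Fin p)) (hc : J'.card ≤ k) (j : Fin p) (hj : j ∉ J') :
    ∑ i ∈ J', |∑ r, D r i * D r j| ≤ mu k D :=
  le_csSup (mu_bddAbove k D hD) ⟨J', hc, j, hj, rfl⟩

lemma mu_nonneg (k : ℕ) (D : Matrix (Fin m) (Fin p) ℝ) (hD : Oblique D) :
    0 ≤ mu k D := by
  by_cases hp : p = 0
  · unfold mu
    have hset : {t : ℝ | ∃ J : Finset (Fin p), J.card ≤ k ∧ ∃ j, j ∉ J ∧
        t = ∑ i ∈ J, |∑ r, D r i * D r j|} = ∅ := by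
      ext t
      simp only [Set.mem_setOf_eq, Set.mem_empty_iff_false, iff_false, not_exists]
      rintro J' ⟨hc, j, _⟩
      have := j.isLt
      omega
    rw [hset, Real.sSup_empty]
  · have hj0 : (0:ℝ) ∈ {t : ℝ | ∃ J : Finset (Fin p), J.card ≤ k ∧ ∃ j, j ∉ J ∧
        t = ∑ i ∈ J, |∑ r, D r i * D r j|} :=
      ⟨∅, by simp, ⟨0, Nat.pos_of_ne_zero hp⟩, by simp⟩
    exact le_csSup (mu_bddAbove k D hD) hj0

lemma row_le_mu (k : ℕ) (D : Matrix (Fin m) (Fin p) ℝ) (hD : Oblique D)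
    (J' : Finset (Fin p)) (hc : J'.card ≤ k) :
    ∀ a : {x // x ∈ J'}, ∑ b ∈ Finset.univ.erase a, |gram D J' a b| ≤ mu k D := by
  intro a
  have hcard : (J'.erase a.1).card ≤ k :=
    le_trans (Finset.card_le_card (Finset.erase_subset _ _)) hc
  have h0 := mu_le k D hD (J'.erase a.1) hcard a.1 (Finset.notMem_erase _ _)
  have h1 : ∑ b ∈ Finset.univ.erase a, |gram D J' a b|
      = ∑ i ∈ J'.erase a.1, |∑ r, D r i * D r a.1| := by
    rw [← erase_sum_eq J' a (fun i => |∑ r, D r i * D r a.1|)]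
    refine Finset.sum_congr rfl fun b _ => ?_
    rw [gram_apply]
    congr 1
    exact Finset.sum_congr rfl fun r _ => mul_comm _ _
  rw [h1]; exact h0

lemma sum_le_sqrt_card {ι : Type*} (J' : Finset ι) (g : ι → ℝ) (hg : ∀ i ∈ J', 0 ≤ g i) :
    ∑ i ∈ J', g i ≤ Real.sqrt J'.card * Real.sqrt (∑ i ∈ J', g i ^ 2) := by
  have h1 : (∑ i ∈ J', g i) ^ 2 ≤ (J'.card : ℝ) * ∑ i ∈ J', g i ^ 2 := by
    have := Finset.sum_mul_sq_le_sq_mul_sq J' (fun _ => (1:ℝ)) g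
    simpa using this
  have h2 : ∑ i ∈ J', g i = Real.sqrt ((∑ i ∈ J', g i)^2) :=
    (Real.sqrt_sq (Finset.sum_nonneg hg)).symm
  rw [h2]
  calc Real.sqrt ((∑ i ∈ J', g i)^2) ≤ Real.sqrt ((J'.card : ℝ) * ∑ i ∈ J', g i ^ 2) :=
        Real.sqrt_le_sqrt h1
    _ = Real.sqrt J'.card * Real.sqrt (∑ i ∈ J', g i ^ 2) :=
        Real.sqrt_mul (Nat.cast_nonneg _) _

lemma l2sq_col_le_frobSq (A : Matrix (Fin m) (Fin p) ℝ) (j : Fin p) :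
    l2sq (_root_.col A j) ≤ frobSq A := by
  unfold l2sq frobSq
  rw [Finset.sum_comm]
  have h1 : ∑ r, _root_.col A j r ^ 2 = ∑ r, A r j ^ 2 := rfl
  rw [h1]
  exact Finset.single_le_sum (f := fun j' => ∑ r, A r j' ^ 2)
    (fun j' _ => Finset.sum_nonneg fun r _ => sq_nonneg _) (Finset.mem_univ j)

lemma l2_col_le_frob (A : Matrix (Fin m) (Fin p) ℝ) (j : Fin p) :
    l2 (_root_.col A j) ≤ frob A :=
  Real.sqrt_le_sqrt (l2sq_col_le_frobSq A j)

lemma frob_nonneg {n q : Type*} [Fintype n] [Fintype q] (A : Matrix n q ℝ) : 0 ≤ frob A :=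
  Real.sqrt_nonneg _

lemma coh_perturb (Do D : Matrix (Fin m) (Fin p) ℝ) (hDo : Oblique Do) (hD : Oblique D)
    (k : ℕ) (hmu : mu k Do < 1/2)
    (J' : Finset (Fin p)) (hcard : J'.card ≤ k) (j : Fin p) (hj : j ∉ J') :
    ∑ i ∈ J', |∑ r, D r i * D r j|
      ≤ mu k Do + (Real.sqrt k * frob (D - Do)
          + Real.sqrt (3/2) * (Real.sqrt k * frob (D - Do))) := by
  have hsqk : Real.sqrt J'.card ≤ Real.sqrt k := Real.sqrt_le_sqrt (by exact_mod_cast hcard)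
  -- decomposition
  have step1 : ∀ i, |∑ r, D r i * D r j| ≤ |∑ r, Do r i * Do r j|
      + |∑ r, (D - Do) r i * D r j| + |∑ r, Do r i * (D - Do) r j| := by
    intro i
    have hdec : ∑ r, D r i * D r j = (∑ r, Do r i * Do r j)
        + (∑ r, (D - Do) r i * D r j) + ∑ r, Do r i * (D - Do) r j := by
      rw [← Finset.sum_add_distrib, ← Finset.sum_add_distrib]
      refine Finset.sum_congr rfl fun r _ => ?_
      simp only [Matrix.sub_apply]
      ring
    rw [hdec]
    exact le_trans (abs_add_le _ _) (add_le_add_left (abs_add_le _ _) _)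
  have hsum1 : ∑ i ∈ J', |∑ r, D r i * D r j|
      ≤ (∑ i ∈ J', |∑ r, Do r i * Do r j|)
        + (∑ i ∈ J', |∑ r, (D - Do) r i * D r j|)
        + ∑ i ∈ J', |∑ r, Do r i * (D - Do) r j| := by
    rw [← Finset.sum_add_distrib, ← Finset.sum_add_distrib]
    exact Finset.sum_le_sum fun i _ => step1 i
  -- T0
  have hT0 : ∑ i ∈ J', |∑ r, Do r i * Do r j| ≤ mu k Do := mu_le k Do hDo J' hcard j hj
  -- T1
  have hT1 : ∑ i ∈ J', |∑ r, (D - Do) r i * D r j| ≤ Real.sqrt k * frob (D - Do) := by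
    have h1 : ∀ i, |∑ r, (D - Do) r i * D r j| ≤ l2 (_root_.col (D - Do) i) := by
      intro i
      have h := abs_dot_le (_root_.col (D - Do) i) (_root_.col D j)
      have h2 : l2 (_root_.col D j) = 1 := by unfold l2; rw [hD j, Real.sqrt_one]
      rw [h2, mul_one] at h
      exact h
    refine le_trans (Finset.sum_le_sum fun i _ => h1 i) ?_
    have h3 := sum_le_sqrt_card J' (fun i => l2 (_root_.col (D - Do) i)) (fun i _ => l2_nonneg _)
    refine le_trans h3 ?_
    have h4 : ∑ i ∈ J', l2 (_root_.col (D - Do) i) ^ 2 ≤ frobSq (D - Do) := by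
      have h5 : ∀ i, l2 (_root_.col (D - Do) i) ^ 2 = l2sq (_root_.col (D - Do) i) := fun i => l2_sq _
      rw [Finset.sum_congr rfl fun i _ => h5 i]
      have h6 : frobSq (D - Do) = ∑ i : Fin p, l2sq (_root_.col (D - Do) i) := by
        unfold frobSq l2sq
        rw [Finset.sum_comm]
        rfl
      rw [h6]
      exact Finset.sum_le_sum_of_subset_of_nonneg (Finset.subset_univ J')
        (fun i _ _ => l2sq_nonneg _)
    calc Real.sqrt J'.card * Real.sqrt (∑ i ∈ J', l2 (_root_.col (D - Do) i) ^ 2)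
        ≤ Real.sqrt k * Real.sqrt (frobSq (D - Do)) :=
          mul_le_mul hsqk (Real.sqrt_le_sqrt h4) (Real.sqrt_nonneg _) (Real.sqrt_nonneg _)
      _ = Real.sqrt k * frob (D - Do) := rfl
  -- T2
  have hT2 : ∑ i ∈ J', |∑ r, Do r i * (D - Do) r j|
      ≤ Real.sqrt (3/2) * (Real.sqrt k * frob (D - Do)) := by
    set ej : Fin m → ℝ := _root_.col (D - Do) j with hej
    set w : {x // x ∈ J'} → ℝ := fun a => ∑ r, Do r a.1 * ej r with hw
    set S : ℝ := ∑ a : {x // x ∈ J'}, w a ^ 2 with hS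
    have hS0 : 0 ≤ S := Finset.sum_nonneg fun a _ => sq_nonneg _
    have hub := (quad_bounds Do J' (mu k Do) (gram_diag Do hDo J')
      (row_le_mu k Do hDo J' hcard) w).2
    have hswap := dot_mulVec_swap (colsub Do J') ej w
    have hSeq : S = ∑ r, ej r * (colsub Do J').mulVec w r := by
      rw [hswap, hS]
      refine Finset.sum_congr rfl fun a _ => ?_
      rw [pow_two, hw]
      rfl
    have hCS : |∑ r, ej r * (colsub Do J').mulVec w r|
        ≤ l2 ej * l2 ((colsub Do J').mulVec w) := abs_dot_le _ _
    have hSle : S ≤ l2 ej * l2 ((colsub Do J').mulVec w) :=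
      le_trans (le_trans (le_abs_self _) (le_of_eq (congrArg abs hSeq.symm).symm)) (hSeq ▸ hCS)
    have hS2 : S ^ 2 ≤ l2sq ej * ((3/2) * S) := by
      have h1 : S ^ 2 ≤ (l2 ej * l2 ((colsub Do J').mulVec w)) ^ 2 := by
        have := mul_nonneg (l2_nonneg ej) (l2_nonneg ((colsub Do J').mulVec w))
        nlinarith
      have h2 : (l2 ej * l2 ((colsub Do J').mulVec w)) ^ 2
          = l2sq ej * l2sq ((colsub Do J').mulVec w) := by
        rw [mul_pow, l2_sq, l2_sq]
      have h3 : l2sq ((colsub Do J').mulVec w) ≤ (3/2) * S := by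
        refine le_trans hub ?_
        have := mu_nonneg k Do hDo
        nlinarith
      have h4 : 0 ≤ l2sq ej := l2sq_nonneg _
      nlinarith
    have hSfin : S ≤ (3/2) * l2sq ej := by
      rcases eq_or_lt_of_le hS0 with h | h
      · rw [← h]; have := l2sq_nonneg ej; linarith
      · nlinarith
    have h5 : ∑ i ∈ J', |∑ r, Do r i * (D - Do) r j| = ∑ a : {x // x ∈ J'}, |w a| := by
      rw [hw]
      exact (Finset.sum_coe_sort J' (fun i => |∑ r, Do r i * ej r|)).symm
    rw [h5]
    have h6 := sum_le_sqrt_card (Finset.univ : Finset {x // x ∈ J'})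
      (fun a => |w a|) (fun a _ => abs_nonneg _)
    have h7 : ∑ a : {x // x ∈ J'}, |w a| ^ 2 = S := by
      rw [hS]
      exact Finset.sum_congr rfl fun a _ => sq_abs _
    have h8 : ((Finset.univ : Finset {x // x ∈ J'}).card : ℝ) = (J'.card : ℝ) := by
      rw [Finset.card_univ, Fintype.card_coe]
    rw [h7, h8] at h6
    refine le_trans h6 ?_
    have h9 : Real.sqrt S ≤ Real.sqrt (3/2) * frob (D - Do) := by
      have h10 : S ≤ (3/2) * frobSq (D - Do) := by
        refine le_trans hSfin ?_
        have := l2sq_col_le_frobSq (D - Do) j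
        nlinarith
      calc Real.sqrt S ≤ Real.sqrt ((3/2) * frobSq (D - Do)) := Real.sqrt_le_sqrt h10
        _ = Real.sqrt (3/2) * frob (D - Do) := Real.sqrt_mul (by norm_num) _
    calc Real.sqrt J'.card * Real.sqrt S ≤ Real.sqrt k * (Real.sqrt (3/2) * frob (D - Do)) :=
          mul_le_mul hsqk h9 (Real.sqrt_nonneg _) (Real.sqrt_nonneg _)
      _ = Real.sqrt (3/2) * (Real.sqrt k * frob (D - Do)) := by ring
  linarith

end Stmt4Aux
end

open Stmt4Aux

/-- Proposition (exact recovery, bounded model): under coherence μ_k(D°) < 1/2, a small enough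
regularization parameter, a dictionary D close enough to D° and a small enough noise level,
α̂_x(D|s°) is the unique Lasso minimizer, recovers the sign pattern of α°, and f_x(D) = φ_x(D|s°);
the same holds at D°, so that Δf_x(D;D°) = Δφ_x(D;D°|s°). -/
theorem stmt4 {m p k : ℕ} (Do : Matrix (Fin m) (Fin p) ℝ) (hDo : Oblique Do)
    (hmu : mu k Do < 1/2)
    (J : Finset (Fin p)) (hJcard : J.card = k)
    (αo : Fin p → ℝ) (hsupp : ∀ i, i ∈ J ↔ αo i ≠ 0)
    (alphaMin Malpha Meps : ℝ) (halphaMin : 0 < alphaMin) (hMalpha : 0 < Malpha)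
    (hfloor : ∀ i ∈ J, alphaMin ≤ |αo i|) (hbound : l2 αo ≤ Malpha)
    (ε : Fin m → ℝ) (hnoise : l2 ε ≤ Meps)
    (lam : ℝ) (hlam : 0 < lam) (hlam2 : lam ≤ alphaMin / 2)
    (D : Matrix (Fin m) (Fin p) ℝ) (hD : Oblique D)
    (hr : frob (D - Do) < (2 * lam / (7 * Malpha)) * (1 - 2 * mu k Do))
    (hMeps : Meps < lam * (1 - 2 * mu k Do) - (7/2) * Malpha * frob (D - Do)) :
    (∀ a : Fin p → ℝ, a ≠ alphaHat lam (xsig Do αo ε) D J (sgnv αo) →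
      lasso lam (xsig Do αo ε) D (alphaHat lam (xsig Do αo ε) D J (sgnv αo))
        < lasso lam (xsig Do αo ε) D a) ∧
    (∀ i, Real.sign (alphaHat lam (xsig Do αo ε) D J (sgnv αo) i) = Real.sign (αo i)) ∧
    fobj lam (xsig Do αo ε) D = phi lam (xsig Do αo ε) D J (sgnv αo) ∧
    (∀ a : Fin p → ℝ, a ≠ alphaHat lam (xsig Do αo ε) Do J (sgnv αo) →
      lasso lam (xsig Do αo ε) Do (alphaHat lam (xsig Do αo ε) Do J (sgnv αo))
        < lasso lam (xsig Do αo ε) Do a) ∧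
    (∀ i, Real.sign (alphaHat lam (xsig Do αo ε) Do J (sgnv αo) i) = Real.sign (αo i)) ∧
    fobj lam (xsig Do αo ε) Do = phi lam (xsig Do αo ε) Do J (sgnv αo) ∧
    fobj lam (xsig Do αo ε) D - fobj lam (xsig Do αo ε) Do
      = phi lam (xsig Do αo ε) D J (sgnv αo) - phi lam (xsig Do αo ε) Do J (sgnv αo) := by
  have hsupp0 : ∀ i ∉ J, αo i = 0 := fun i hi => by
    by_contra h
    exact hi ((hsupp i).mpr h)
  obtain ⟨x, hxdef⟩ : ∃ v : Fin m → ℝ, xsig Do αo ε = v := ⟨_, rfl⟩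
  rw [hxdef]
  obtain ⟨r, hrdef⟩ : ∃ v : ℝ, frob (D - Do) = v := ⟨_, rfl⟩
  rw [hrdef] at hr hMeps
  obtain ⟨X, hXdef⟩ : ∃ v : ℝ,
      Real.sqrt k * r + Real.sqrt (3/2) * (Real.sqrt k * r) = v := ⟨_, rfl⟩
  have hxr : ∀ r', x r' = Do.mulVec αo r' + ε r' := fun r' => by rw [← hxdef]; rfl
  have hμ0 : 0 ≤ mu k Do := mu_nonneg k Do hDo
  have hr0 : 0 ≤ r := hrdef ▸ frob_nonneg (D - Do)
  have hMeps0 : 0 ≤ Meps := le_trans (l2_nonneg ε) hnoise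
  have hsk0 : 0 ≤ Real.sqrt k := Real.sqrt_nonneg _
  have hsq320 : 0 ≤ Real.sqrt (3/2:ℝ) := Real.sqrt_nonneg _
  have hsq32 : Real.sqrt (3/2 : ℝ) ≤ 3/2 := by
    calc Real.sqrt (3/2:ℝ) ≤ Real.sqrt ((3/2:ℝ)^2) := Real.sqrt_le_sqrt (by norm_num)
      _ = 3/2 := Real.sqrt_sq (by norm_num)
  have hX0 : 0 ≤ X := by
    rw [← hXdef]
    have h1 : 0 ≤ Real.sqrt k * r := mul_nonneg hsk0 hr0
    nlinarith
  -- sqrt k * lam ≤ Malpha / 2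
  have hkcard : ((k:ℝ)) * alphaMin ^ 2 ≤ l2sq αo := by
    have h1 : ∑ i ∈ J, alphaMin ^ 2 ≤ ∑ i ∈ J, αo i ^ 2 := by
      refine Finset.sum_le_sum fun i hi => ?_
      have h := hfloor i hi
      nlinarith [sq_abs (αo i)]
    have h2 : ∑ i ∈ J, αo i ^ 2 ≤ l2sq αo :=
      Finset.sum_le_sum_of_subset_of_nonneg (Finset.subset_univ J) (fun i _ _ => sq_nonneg _)
    have h3 : (∑ _i ∈ J, alphaMin ^ 2) = (k:ℝ) * alphaMin ^ 2 := by
      rw [Finset.sum_const, hJcard, nsmul_eq_mul]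
    linarith
  have hsqklam : Real.sqrt k * lam ≤ Malpha / 2 := by
    have h1 : Real.sqrt ((k:ℝ) * alphaMin^2) = Real.sqrt k * alphaMin := by
      rw [Real.sqrt_mul (Nat.cast_nonneg k), Real.sqrt_sq (le_of_lt halphaMin)]
    have h2 : Real.sqrt k * alphaMin ≤ Malpha := by
      calc Real.sqrt k * alphaMin = Real.sqrt ((k:ℝ)*alphaMin^2) := h1.symm
        _ ≤ Real.sqrt (l2sq αo) := Real.sqrt_le_sqrt hkcard
        _ ≤ Malpha := hbound
    have h3 := mul_le_mul_of_nonneg_left hlam2 hsk0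
    linarith
  have hXb : 2 * lam * X ≤ (5/2) * Malpha * r := by
    have h1 : X ≤ (5/2) * (Real.sqrt k * r) := by
      rw [← hXdef]
      nlinarith [mul_nonneg hsk0 hr0]
    have h2 : 2*lam*X ≤ 2*lam*((5/2)*(Real.sqrt k * r)) :=
      mul_le_mul_of_nonneg_left h1 (by linarith)
    have h3 : Real.sqrt k * lam * r ≤ Malpha/2 * r := mul_le_mul_of_nonneg_right hsqklam hr0
    nlinarith
  have h72 : (7/2) * Malpha * r < lam * (1 - 2 * mu k Do) := by linarith
  have hMr0 : 0 ≤ Malpha * r := mul_nonneg hMalpha.le hr0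
  have hμb_half : mu k Do + X < 1/2 := by
    have h4 : 2*lam*X < lam*(1-2*mu k Do) := by linarith
    have h4' : (2*lam)*X < (2*lam)*((1-2*mu k Do)/2) := by linarith
    have h5 : X < (1-2*mu k Do)/2 := lt_of_mul_lt_mul_left h4' (by linarith)
    linarith
  have hElamD : Meps + Malpha * r < lam * (1 - 2*(mu k Do + X)) := by linarith [hMeps, hXb]
  -- noise bound for D
  have hfrobswap : frob (Do - D) = frob (D - Do) := by
    unfold frob frobSq
    congr 1
    refine Finset.sum_congr rfl fun i _ => Finset.sum_congr rfl fun j' _ => ?_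
    simp only [Matrix.sub_apply]
    ring
  have hED : ∀ j : Fin p, |∑ r', D r' j * (x r' - D.mulVec αo r')| ≤ Meps + Malpha * r := by
    intro j
    have h1 : ∀ r', x r' - D.mulVec αo r' = ε r' + ((Do - D).mulVec αo) r' := by
      intro r'
      rw [hxr]
      have h2 : (Do - D).mulVec αo r' = Do.mulVec αo r' - D.mulVec αo r' := by
        rw [Matrix.sub_mulVec]
        rfl
      rw [h2]; ring
    have h2 : |∑ r', D r' j * (x r' - D.mulVec αo r')|
        ≤ l2 (fun r' => x r' - D.mulVec αo r') := by
      have h := abs_dot_le (_root_.col D j) (fun r' => x r' - D.mulVec αo r')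
      have h3 : l2 (_root_.col D j) = 1 := by unfold l2; rw [hD j, Real.sqrt_one]
      rw [h3, one_mul] at h
      exact h
    refine le_trans h2 ?_
    have h4 : l2 (fun r' => x r' - D.mulVec αo r') ≤ l2 ε + l2 ((Do - D).mulVec αo) := by
      rw [show (fun r' => x r' - D.mulVec αo r')
          = fun r' => ε r' + ((Do - D).mulVec αo) r' from funext h1]
      exact l2_add_le ε ((Do - D).mulVec αo)
    have h5 : l2 ((Do - D).mulVec αo) ≤ frob (Do - D) * l2 αo := l2_mulVec_le _ _
    have h6 : frob (Do - D) * l2 αo ≤ r * Malpha := by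
      rw [hfrobswap, hrdef]
      exact mul_le_mul_of_nonneg_left hbound hr0
    have h7 : r * Malpha = Malpha * r := mul_comm _ _
    linarith
  have hcohD : ∀ J' : Finset (Fin p), J'.card ≤ k → ∀ j ∉ J',
      ∑ i ∈ J', |∑ r', D r' i * D r' j| ≤ mu k Do + X := by
    intro J' hc j hj
    rw [← hXdef, ← hrdef]
    exact coh_perturb Do D hDo hD k hmu J' hc j hj
  have hm1 := master k D hD J hJcard αo hsupp0 alphaMin halphaMin hfloor x lam hlam hlam2
    (mu k Do + X) hμb_half (add_nonneg hμ0 hX0) hcohD (Meps + Malpha * r) hED hElamD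
  -- the reference dictionary
  have hEDo : ∀ j : Fin p, |∑ r', Do r' j * (x r' - Do.mulVec αo r')| ≤ Meps := by
    intro j
    have h1 : ∀ r', x r' - Do.mulVec αo r' = ε r' := fun r' => by rw [hxr]; ring
    rw [show (fun r' => Do r' j * (x r' - Do.mulVec αo r'))
        = fun r' => Do r' j * ε r' from funext fun r' => by rw [h1]]
    have h := abs_dot_le (_root_.col Do j) ε
    have h3 : l2 (_root_.col Do j) = 1 := by unfold l2; rw [hDo j, Real.sqrt_one]
    rw [h3, one_mul] at h
    exact le_trans h hnoise
  have hElamDo : Meps < lam * (1 - 2 * mu k Do) := by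
    have h0 : 0 ≤ (7/2) * Malpha * r := by positivity
    linarith
  have hm2 := master k Do hDo J hJcard αo hsupp0 alphaMin halphaMin hfloor x lam hlam hlam2
    (mu k Do) hmu hμ0 (fun J' hc j hj => mu_le k Do hDo J' hc j hj) Meps hEDo hElamDo
  exact ⟨hm1.1, hm1.2.1, hm1.2.2, hm2.1, hm2.2.1, hm2.2.2, by rw [hm1.2.2, hm2.2.2]⟩
end

section
/- Let J ⊆ {1,…,p}, let α° ∈ ℝ^p be supported on J with sign vector s° = sign(α°), and let x ∈ ℝ^m be arbitrary. Let D ∈ ℝ^{m×p} be such that D_JᵀD_J is invertible, and λ > 0. Then ‖(α̂_x(D|s°) − α°)_J‖_∞ ≤ |||(D_JᵀD_J)^{-1}|||_∞ · (λ + ‖D_Jᵀ(x − Dα°)‖_∞). -/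
open MeasureTheory Matrix Finset
open scoped ENNReal NNReal

/-- Lemma: bound on ‖(α̂_x(D|s°) − α°)_J‖_∞ in terms of |||(D_JᵀD_J)⁻¹|||_∞ and
‖D_Jᵀ(x − Dα°)‖_∞. -/
theorem stmt12 {m p : ℕ} (D : Matrix (Fin m) (Fin p) ℝ) (J : Finset (Fin p))
    (hinv : IsUnit (gram D J)) (lam : ℝ) (hlam : 0 < lam)
    (αo : Fin p → ℝ) (hsupp : ∀ i, i ∉ J → αo i = 0) (x : Fin m → ℝ) :
    linf (fun a : J => alphaHat lam x D J (sgnv αo) a.1 - αo a.1)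
      ≤ opInf (theta D J)
          * (lam + linf (fun a : J => ∑ r, D r a.1 * (x r - D.mulVec αo r))) := by
  classical
  set s : Fin p → ℝ := sgnv αo with hs
  set v : J → ℝ := fun b => ∑ r, D r b.1 * (x r - D.mulVec αo r) with hv
  have hinvdet : IsUnit (gram D J).det := (Matrix.isUnit_iff_isUnit_det _).mp hinv
  have hTG : theta D J * gram D J = 1 := Matrix.nonsing_inv_mul _ hinvdet
  set αJ : J → ℝ := fun b => αo b.1 with hαJ
  have hDα : ∀ i, D.mulVec αo i = (colsub D J).mulVec αJ i := by
    intro i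
    have h1 : ∑ c : J, D i c.1 * αo c.1 = ∑ j ∈ J, D i j * αo j :=
      J.sum_coe_sort (fun j => D i j * αo j)
    have h2 : ∑ j ∈ J, D i j * αo j = ∑ j, D i j * αo j := by
      refine Finset.sum_subset (Finset.subset_univ J) ?_
      intro j _ hj
      rw [hsupp j hj, mul_zero]
    simp only [Matrix.mulVec, dotProduct, colsub]
    rw [h1, h2]
  have key : ∀ a : J, alphaHat lam x D J s a.1 - αo a.1
      = ∑ b : J, theta D J a b * (v b - lam * s b.1) := by
    intro a
    have hα : αo a.1 = ∑ b : J, theta D J a b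
        * ((colsub D J)ᵀ.mulVec (fun i => D.mulVec αo i) b) := by
      have h1 : (theta D J * gram D J).mulVec αJ a = αJ a := by
        rw [hTG, Matrix.one_mulVec]
      have h2 : (theta D J * gram D J).mulVec αJ a
          = (theta D J).mulVec ((gram D J).mulVec αJ) a := by
        rw [Matrix.mulVec_mulVec]
      have h3 : (gram D J).mulVec αJ
          = (colsub D J)ᵀ.mulVec (fun i => D.mulVec αo i) := by
        funext b
        have : (gram D J).mulVec αJ b
            = (colsub D J)ᵀ.mulVec ((colsub D J).mulVec αJ) b := by
          rw [_root_.gram, Matrix.mulVec_mulVec]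
        rw [this]
        have hfun : (colsub D J).mulVec αJ = fun i => D.mulVec αo i :=
          funext fun i => (hDα i).symm
        rw [hfun]
      calc αo a.1 = αJ a := rfl
      _ = (theta D J * gram D J).mulVec αJ a := h1.symm
      _ = (theta D J).mulVec ((gram D J).mulVec αJ) a := h2
      _ = ∑ b : J, theta D J a b
            * ((colsub D J)ᵀ.mulVec (fun i => D.mulVec αo i) b) := by
          rw [h3]; rfl
    have hhat : alphaHat lam x D J s a.1
        = (∑ b : J, theta D J a b * ((colsub D J)ᵀ.mulVec x b))
          - lam * ∑ b : J, theta D J a b * s b.1 := by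
      simp only [alphaHat, dif_pos a.2]
      have ha : (⟨a.1, a.2⟩ : J) = a := rfl
      rw [ha]
      have hp : (pinv D J).mulVec x a
          = ∑ b : J, theta D J a b * ((colsub D J)ᵀ.mulVec x b) := by
        rw [pinv, ← Matrix.mulVec_mulVec]; rfl
      rw [hp]; rfl
    rw [hhat, hα]
    rw [Finset.mul_sum, ← Finset.sum_sub_distrib, ← Finset.sum_sub_distrib]
    refine Finset.sum_congr rfl (fun b _ => ?_)
    have hvb : v b = (colsub D J)ᵀ.mulVec x b
        - (colsub D J)ᵀ.mulVec (fun i => D.mulVec αo i) b := by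
      simp only [hv, Matrix.mulVec, dotProduct, Matrix.transpose_apply, colsub,
        ← Finset.sum_sub_distrib]
      exact Finset.sum_congr rfl (fun r _ => by ring)
    rw [hvb]; ring
  rcases isEmpty_or_nonempty J with hJ | hJ
  · simp [linf, opInf, Set.range_eq_empty, Real.sSup_empty]
  · have hLb : ∀ b : J, |v b| ≤ linf v := fun b =>
      le_csSup (Set.finite_range _).bddAbove ⟨b, rfl⟩
    have hL0 : 0 ≤ linf v :=
      le_trans (abs_nonneg _) (hLb (Classical.arbitrary J))
    have hrow : ∀ a : J, ∑ b : J, |theta D J a b| ≤ opInf (theta D J) := fun a =>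
      le_csSup (Set.finite_range _).bddAbove ⟨a, rfl⟩
    have hsb : ∀ i : Fin p, |s i| ≤ 1 := by
      intro i
      simp only [hs, sgnv]
      rcases lt_trichotomy (αo i) 0 with h | h | h
      · rw [Real.sign_of_neg h]; norm_num
      · rw [h, Real.sign_zero]; norm_num
      · rw [Real.sign_of_pos h]; norm_num
    refine csSup_le (Set.range_nonempty _) ?_
    rintro t ⟨a, rfl⟩
    have h1 : |alphaHat lam x D J s a.1 - αo a.1|
        ≤ ∑ b : J, |theta D J a b| * (linf v + lam) := by
      rw [key a]
      refine le_trans (Finset.abs_sum_le_sum_abs _ _) ?_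
      refine Finset.sum_le_sum (fun b _ => ?_)
      rw [abs_mul]
      refine mul_le_mul_of_nonneg_left ?_ (abs_nonneg _)
      refine le_trans (abs_sub _ _) ?_
      have : |lam * s b.1| ≤ lam := by
        rw [abs_mul, abs_of_pos hlam]
        nlinarith [hsb b.1, hlam.le]
      linarith [hLb b]
    refine le_trans h1 ?_
    rw [← Finset.sum_mul]
    have h2 : (0:ℝ) ≤ linf v + lam := by linarith
    calc (∑ b : J, |theta D J a b|) * (linf v + lam)
        ≤ opInf (theta D J) * (linf v + lam) :=
          mul_le_mul_of_nonneg_right (hrow a) h2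
      _ = opInf (theta D J) * (lam + linf v) := by ring
end

section
/- Let D ∈ ℝ^{m×p} have unit ℓ₂-norm columns with μ_k(D) < 1/2. Let α° ∈ ℝ^p be supported on J with |J| ≤ k, s° = sign(α°), and let λ > 0 and x ∈ ℝ^m satisfy min_{j∈J}|α°_j| ≥ 2λ and ‖x − Dα°‖₂ < λ(1 − 2μ_k(D)). Then α̂_x(D|s°) is the unique minimizer over ℝ^p of α ↦ ½‖x − Dα‖₂² + λ‖α‖₁, and sign(α̂_x(D|s°)) = s°. -/
open MeasureTheory Matrix Finset
open scoped ENNReal NNReal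

section stmt13Aux

variable {m p : ℕ}

private lemma abs_dot_le_l2' (f g : Fin m → ℝ) (hf : ∑ r, f r ^ 2 = 1) :
    |∑ r, f r * g r| ≤ l2 g := by
  have h2 : 0 ≤ ∑ r, g r ^ 2 := Finset.sum_nonneg fun i _ => sq_nonneg _
  have hcs := Real.sum_mul_le_sqrt_mul_sqrt Finset.univ f g
  have hcs' := Real.sum_mul_le_sqrt_mul_sqrt Finset.univ (fun r => -f r) g
  simp only [hf, Real.sqrt_one, one_mul, neg_mul, Finset.sum_neg_distrib] at hcs hcs'
  have hneg : ∑ r, (-f r) ^ 2 = 1 := by simpa [neg_pow] using hf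
  rw [hneg] at hcs'
  simp only [Real.sqrt_one, one_mul] at hcs'
  rw [abs_le]
  constructor
  · rw [l2, l2sq]; linarith [hcs']
  · rw [l2, l2sq]; linarith [hcs]

private lemma col_sq_one {D : Matrix (Fin m) (Fin p) ℝ} (hD : Oblique D) (j : Fin p) :
    ∑ r, D r j ^ 2 = 1 := by
  have := hD j
  simpa [l2sq, _root_.col] using this

private lemma le_mu' {D : Matrix (Fin m) (Fin p) ℝ} (hD : Oblique D) (k : ℕ)
    (J : Finset (Fin p)) (hJ : J.card ≤ k) (j : Fin p) (hj : j ∉ J) :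
    ∑ i ∈ J, |∑ r, D r i * D r j| ≤ mu k D := by
  apply le_csSup
  · refine ⟨k, ?_⟩
    rintro t ⟨S, hS, j', hj', rfl⟩
    calc ∑ i ∈ S, |∑ r, D r i * D r j'| ≤ ∑ _i ∈ S, (1:ℝ) := by
          refine Finset.sum_le_sum fun i _ => ?_
          have := abs_dot_le_l2' (fun r => D r i) (fun r => D r j') (col_sq_one hD i)
          have h2 : l2 (fun r => D r j') = 1 := by
            rw [l2, l2sq]
            simpa using Real.sqrt_eq_one.2 (col_sq_one hD j')
          simpa [h2] using this
      _ = (S.card : ℝ) := by simp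
      _ ≤ (k : ℝ) := by exact_mod_cast hS
  · exact ⟨J, hJ, j, hj, rfl⟩

private lemma gram_apply' (D : Matrix (Fin m) (Fin p) ℝ) (J : Finset (Fin p)) (a b : J) :
    gram D J a b = ∑ r, D r a.1 * D r b.1 := by
  simp [_root_.gram, Matrix.mul_apply, colsub, Matrix.transpose_apply]

private lemma gram_row_bound {D : Matrix (Fin m) (Fin p) ℝ} (hD : Oblique D) {k : ℕ}
    {J : Finset (Fin p)} (hJ : J.card ≤ k) (a : J) :
    ∑ b ∈ Finset.univ.erase a, |gram D J a b| ≤ mu k D := by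
  classical
  have e1 : (∑ b ∈ Finset.univ.erase a, |gram D J a b|) + |gram D J a a|
      = ∑ b : J, |gram D J a b| := Finset.sum_erase_add _ _ (Finset.mem_univ a)
  have e2 : ∑ b : J, |gram D J a b| = ∑ i ∈ J, |∑ r, D r i * D r a.1| := by
    rw [← Finset.sum_coe_sort J (fun i => |∑ r, D r i * D r a.1|)]
    refine Finset.sum_congr rfl fun b _ => ?_
    rw [gram_apply']
    congr 1
    exact Finset.sum_congr rfl fun r _ => mul_comm _ _
  have e3 : (∑ i ∈ J.erase a.1, |∑ r, D r i * D r a.1|) + |∑ r, D r a.1 * D r a.1|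
      = ∑ i ∈ J, |∑ r, D r i * D r a.1| := by
    have := Finset.sum_erase_add J (fun i => |∑ r, D r i * D r a.1|) a.2
    simpa using this
  have e4 : |gram D J a a| = |∑ r, D r a.1 * D r a.1| := by rw [gram_apply']
  have hle : ∑ i ∈ J.erase a.1, |∑ r, D r i * D r a.1| ≤ mu k D :=
    le_mu' hD k (J.erase a.1) (le_trans (Finset.card_erase_le) hJ) a.1
      (Finset.notMem_erase _ _)
  linarith

private lemma gram_inv_bound {D : Matrix (Fin m) (Fin p) ℝ} (hD : Oblique D) {k : ℕ}
    (hmu : mu k D < 1/2) {J : Finset (Fin p)} (hJ : J.card ≤ k)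
    (u : J → ℝ) {c : ℝ} (hc : ∀ a, |(gram D J).mulVec u a| ≤ c) (a : J) :
    (1 - mu k D) * |u a| ≤ c := by
  classical
  obtain ⟨a0, -, ha0⟩ := Finset.exists_max_image Finset.univ (fun b => |u b|)
    ⟨a, Finset.mem_univ a⟩
  have hgaa : gram D J a0 a0 = 1 := by
    rw [gram_apply']
    have := col_sq_one hD a0.1
    calc ∑ r, D r a0.1 * D r a0.1 = ∑ r, D r a0.1 ^ 2 :=
          Finset.sum_congr rfl fun r _ => (sq (D r a0.1)).symm
      _ = 1 := this
  have hsplit : (gram D J).mulVec u a0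
      = u a0 + ∑ b ∈ Finset.univ.erase a0, gram D J a0 b * u b := by
    simp only [Matrix.mulVec, dotProduct]
    rw [← Finset.add_sum_erase _ (fun b => gram D J a0 b * u b) (Finset.mem_univ a0), hgaa,
      one_mul]
  set R := ∑ b ∈ Finset.univ.erase a0, gram D J a0 b * u b with hR
  have hRle : |R| ≤ mu k D * |u a0| := by
    calc |R| ≤ ∑ b ∈ Finset.univ.erase a0, |gram D J a0 b * u b| := Finset.abs_sum_le_sum_abs _ _
      _ ≤ ∑ b ∈ Finset.univ.erase a0, |gram D J a0 b| * |u a0| := by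
          refine Finset.sum_le_sum fun b _ => ?_
          rw [abs_mul]
          exact mul_le_mul_of_nonneg_left (ha0 b (Finset.mem_univ b)) (abs_nonneg _)
      _ = (∑ b ∈ Finset.univ.erase a0, |gram D J a0 b|) * |u a0| := by rw [Finset.sum_mul]
      _ ≤ mu k D * |u a0| :=
          mul_le_mul_of_nonneg_right (gram_row_bound hD hJ a0) (abs_nonneg _)
  have hc0 := hc a0
  rw [hsplit] at hc0
  have habs : |u a0| - |R| ≤ |u a0 + R| := by
    have := abs_add_le (u a0 + R) (-R)
    simp only [add_neg_cancel_right, abs_neg] at this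
    linarith
  have hfin : (1 - mu k D) * |u a0| ≤ c := by nlinarith [abs_nonneg (u a0)]
  have hmono : (1 - mu k D) * |u a| ≤ (1 - mu k D) * |u a0| := by
    have h1 : (0:ℝ) ≤ 1 - mu k D := by linarith
    exact mul_le_mul_of_nonneg_left (ha0 a (Finset.mem_univ a)) h1
  linarith

end stmt13Aux

section stmt13Aux2

variable {m p : ℕ}

private lemma gram_det_ne_zero {D : Matrix (Fin m) (Fin p) ℝ} (hD : Oblique D) {k : ℕ}
    (hmu : mu k D < 1/2) {J : Finset (Fin p)} (hJ : J.card ≤ k) :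
    (gram D J).det ≠ 0 := by
  classical
  intro h
  obtain ⟨v, hv0, hv⟩ := Matrix.exists_mulVec_eq_zero_iff.2 h
  obtain ⟨a, ha⟩ := Function.ne_iff.1 hv0
  have hb := gram_inv_bound hD hmu hJ v (c := 0)
    (fun b => by rw [hv]; simp) a
  have h1 : (0:ℝ) < 1 - mu k D := by linarith
  have h2 : 0 < |v a| := abs_pos.2 ha
  nlinarith

private lemma theta_gram_mulVec {D : Matrix (Fin m) (Fin p) ℝ} (hD : Oblique D) {k : ℕ}
    (hmu : mu k D < 1/2) {J : Finset (Fin p)} (hJ : J.card ≤ k) (v : J → ℝ) :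
    (gram D J).mulVec ((theta D J).mulVec v) = v := by
  rw [Matrix.mulVec_mulVec, theta,
    Matrix.mul_nonsing_inv _ (isUnit_iff_ne_zero.2 (gram_det_ne_zero hD hmu hJ)),
    Matrix.one_mulVec]

private lemma mulVec_restrict (D : Matrix (Fin m) (Fin p) ℝ) (J : Finset (Fin p))
    (v : Fin p → ℝ) (hv : ∀ i ∉ J, v i = 0) :
    D.mulVec v = (colsub D J).mulVec (fun a => v a.1) := by
  classical
  funext i
  simp only [Matrix.mulVec, dotProduct, colsub]
  rw [show (∑ x : {x // x ∈ J}, D i x.1 * v x.1) = ∑ j ∈ J, D i j * v j from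
    Finset.sum_coe_sort J (fun j => D i j * v j)]
  symm
  apply Finset.sum_subset (Finset.subset_univ J)
  intro j _ hj
  rw [hv j hj, mul_zero]

private lemma abs_sign_le_one (t : ℝ) : |Real.sign t| ≤ 1 := by
  rcases lt_trichotomy t 0 with h | h | h
  · rw [Real.sign_of_neg h]; norm_num
  · rw [h, Real.sign_zero]; norm_num
  · rw [Real.sign_of_pos h]; norm_num

end stmt13Aux2

/-- Lemma (robust sign recovery): under coherence μ_k(D) < 1/2, coefficient floor 2λ and small
residual, α̂_x(D|s°) is the unique Lasso minimizer and recovers the sign pattern of α°. -/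
theorem stmt13 {m p k : ℕ} (D : Matrix (Fin m) (Fin p) ℝ) (hD : Oblique D)
    (hmu : mu k D < 1/2) (J : Finset (Fin p)) (hJ : J.card ≤ k)
    (αo : Fin p → ℝ) (hsupp : ∀ i, i ∉ J → αo i = 0)
    (lam : ℝ) (hlam : 0 < lam)
    (hfloor : ∀ i ∈ J, 2 * lam ≤ |αo i|)
    (x : Fin m → ℝ) (hres : l2 (fun i => x i - D.mulVec αo i) < lam * (1 - 2 * mu k D)) :
    (∀ a : Fin p → ℝ, a ≠ alphaHat lam x D J (sgnv αo) →
      lasso lam x D (alphaHat lam x D J (sgnv αo)) < lasso lam x D a) ∧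
    (∀ i, Real.sign (alphaHat lam x D J (sgnv αo) i) = Real.sign (αo i)) := by
  classical
  set s : Fin p → ℝ := sgnv αo with hs
  set αh : Fin p → ℝ := alphaHat lam x D J s with hαh
  have h1m : (0:ℝ) < 1 - mu k D := by linarith
  have h12 : (0:ℝ) < lam * (1 - 2 * mu k D) :=
    lt_of_le_of_lt (Real.sqrt_nonneg _) hres
  -- basic facts about αh off the support
  have hαh_out : ∀ i ∉ J, αh i = 0 := by
    intro i hi
    rw [hαh, alphaHat, dif_neg hi]
  -- the correction vector w
  set w : J → ℝ := fun a => αh a.1 - αo a.1 with hw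
  -- formula : gram * w
  have hform : (fun a : J => αh a.1)
      = (theta D J).mulVec (fun b : J => (∑ r, D r b.1 * x r) - lam * s b.1) := by
    funext a
    rw [hαh, alphaHat, dif_pos a.2, pinv, ← Matrix.mulVec_mulVec]
    simp only [Matrix.mulVec, dotProduct, Matrix.transpose_apply, colsub]
    rw [Finset.mul_sum, ← Finset.sum_sub_distrib]
    exact Finset.sum_congr rfl fun b _ => by ring
  have hrestr : D.mulVec αo = (colsub D J).mulVec (fun a : J => αo a.1) :=
    mulVec_restrict D J αo hsupp
  have hGw : (gram D J).mulVec w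
      = fun a : J => (∑ r, D r a.1 * (x r - D.mulVec αo r)) - lam * s a.1 := by
    have hw2 : w = (fun a : J => αh a.1) - (fun a : J => αo a.1) := rfl
    rw [hw2, Matrix.mulVec_sub, hform,
      theta_gram_mulVec hD hmu hJ]
    have hgαo : (gram D J).mulVec (fun a : J => αo a.1)
        = fun a : J => ∑ r, D r a.1 * D.mulVec αo r := by
      rw [_root_.gram, ← Matrix.mulVec_mulVec, ← hrestr]
      funext a
      simp [Matrix.mulVec, dotProduct, Matrix.transpose_apply, colsub]
    rw [hgαo]
    funext a
    simp only [Pi.sub_apply]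
    rw [show (∑ r, D r a.1 * (x r - D.mulVec αo r))
        = (∑ r, D r a.1 * x r) - ∑ r, D r a.1 * D.mulVec αo r from by
      rw [← Finset.sum_sub_distrib]
      exact Finset.sum_congr rfl fun r _ => by ring]
    ring
  -- bound on w
  have hwlt : ∀ a : J, |w a| < 2 * lam := by
    intro a
    have hb : ∀ b : J, |(gram D J).mulVec w b|
        ≤ l2 (fun i => x i - D.mulVec αo i) + lam := by
      intro b
      rw [hGw]
      have h1 : |∑ r, D r b.1 * (x r - D.mulVec αo r)|
          ≤ l2 (fun i => x i - D.mulVec αo i) :=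
        abs_dot_le_l2' _ _ (col_sq_one hD b.1)
      have h2 : |lam * s b.1| ≤ lam := by
        rw [abs_mul, abs_of_pos hlam]
        have := abs_sign_le_one (αo b.1)
        calc lam * |s b.1| ≤ lam * 1 := by
              refine mul_le_mul_of_nonneg_left ?_ hlam.le
              rw [hs]; exact this
          _ = lam := mul_one lam
      calc |(∑ r, D r b.1 * (x r - D.mulVec αo r)) - lam * s b.1|
          ≤ |∑ r, D r b.1 * (x r - D.mulVec αo r)| + |lam * s b.1| := abs_sub _ _
        _ ≤ l2 (fun i => x i - D.mulVec αo i) + lam := add_le_add h1 h2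
    have := gram_inv_bound hD hmu hJ w hb a
    nlinarith [abs_nonneg (w a)]
  -- sign facts
  have hαh_in : ∀ (i : Fin p) (hi : i ∈ J), αh i = αo i + w ⟨i, hi⟩ := by
    intro i hi
    rw [hw]
    ring
  have hpos : ∀ (i : Fin p) (hi : i ∈ J), (0 < αo i → 0 < αh i) ∧ (αo i < 0 → αh i < 0) := by
    intro i hi
    have hwi := hwlt ⟨i, hi⟩
    have hfl := hfloor i hi
    have heq := hαh_in i hi
    have habs := abs_lt.1 hwi
    constructor
    · intro h
      rw [abs_of_pos h] at hfl
      rw [heq]; linarith [habs.1]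
    · intro h
      rw [abs_of_neg h] at hfl
      rw [heq]; linarith [habs.2]
  have hαo_ne : ∀ i ∈ J, αo i ≠ 0 := by
    intro i hi h0
    have := hfloor i hi
    rw [h0, abs_zero] at this
    linarith
  have hsigns : ∀ i, Real.sign (αh i) = Real.sign (αo i) := by
    intro i
    by_cases hi : i ∈ J
    · rcases lt_trichotomy (αo i) 0 with h | h | h
      · rw [Real.sign_of_neg ((hpos i hi).2 h), Real.sign_of_neg h]
      · exact absurd h (hαo_ne i hi)
      · rw [Real.sign_of_pos ((hpos i hi).1 h), Real.sign_of_pos h]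
    · rw [hαh_out i hi, hsupp i hi]
  refine ⟨?_, hsigns⟩
  -- stationarity / subgradient bounds
  have hkey : ∀ j, (∑ i, D i j * (x i - D.mulVec αh i))
      = (∑ i, D i j * (x i - D.mulVec αo i))
        - ∑ a : J, (∑ i, D i j * D i a.1) * w a := by
    intro j
    have hsub : D.mulVec (fun t => αh t - αo t) = (colsub D J).mulVec w :=
      mulVec_restrict D J _ (fun i hi => by rw [hαh_out i hi, hsupp i hi, sub_zero])
    have hd : ∀ i, D.mulVec αh i = D.mulVec αo i + (colsub D J).mulVec w i := by
      intro i
      have h1 : D.mulVec αh i - D.mulVec αo i = D.mulVec (fun t => αh t - αo t) i := by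
        rw [show (fun t => αh t - αo t) = αh - αo from rfl, Matrix.mulVec_sub]
        rfl
      rw [hsub] at h1
      linarith
    have hsecond : ∑ i, D i j * ((colsub D J).mulVec w i)
        = ∑ a : J, (∑ i, D i j * D i a.1) * w a := by
      calc ∑ i, D i j * ((colsub D J).mulVec w i)
          = ∑ i, ∑ a : J, D i j * D i a.1 * w a := by
            refine Finset.sum_congr rfl fun i _ => ?_
            simp only [Matrix.mulVec, dotProduct, colsub]
            rw [Finset.mul_sum]
            exact Finset.sum_congr rfl fun a _ => by ring
        _ = ∑ a : J, ∑ i, D i j * D i a.1 * w a := Finset.sum_comm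
        _ = ∑ a : J, (∑ i, D i j * D i a.1) * w a :=
            Finset.sum_congr rfl fun a _ => (Finset.sum_mul _ _ _).symm
    calc ∑ i, D i j * (x i - D.mulVec αh i)
        = ∑ i, (D i j * (x i - D.mulVec αo i) - D i j * ((colsub D J).mulVec w i)) := by
          refine Finset.sum_congr rfl fun i _ => ?_
          rw [hd i]; ring
      _ = (∑ i, D i j * (x i - D.mulVec αo i))
            - ∑ i, D i j * ((colsub D J).mulVec w i) := Finset.sum_sub_distrib _ _
      _ = _ := by rw [hsecond]
  have hcv_in : ∀ (j : Fin p), j ∈ J → (∑ i, D i j * (x i - D.mulVec αh i)) = lam * s j := by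
    intro j hj
    have h1 := congrFun hGw ⟨j, hj⟩
    have h2 : ∑ a : J, (∑ i, D i j * D i a.1) * w a = (gram D J).mulVec w ⟨j, hj⟩ := by
      simp only [Matrix.mulVec, dotProduct]
      refine Finset.sum_congr rfl fun a _ => ?_
      rw [gram_apply']
    rw [hkey j, h2, h1]
    ring
  have hcv_out : ∀ (j : Fin p), j ∉ J → |∑ i, D i j * (x i - D.mulVec αh i)| < lam := by
    intro j hj
    rw [hkey j]
    have h1 : |∑ i, D i j * (x i - D.mulVec αo i)|
        ≤ l2 (fun i => x i - D.mulVec αo i) :=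
      abs_dot_le_l2' _ _ (col_sq_one hD j)
    have h2 : |∑ a : J, (∑ i, D i j * D i a.1) * w a| ≤ mu k D * (2 * lam) := by
      calc |∑ a : J, (∑ i, D i j * D i a.1) * w a|
          ≤ ∑ a : J, |(∑ i, D i j * D i a.1) * w a| := Finset.abs_sum_le_sum_abs _ _
        _ ≤ ∑ a : J, |∑ i, D i j * D i a.1| * (2 * lam) := by
            refine Finset.sum_le_sum fun a _ => ?_
            rw [abs_mul]
            exact mul_le_mul_of_nonneg_left (hwlt a).le (abs_nonneg _)
        _ = (∑ a : J, |∑ i, D i j * D i a.1|) * (2 * lam) := (Finset.sum_mul _ _ _).symm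
        _ ≤ mu k D * (2 * lam) := by
            refine mul_le_mul_of_nonneg_right ?_ (by linarith)
            have e : ∑ a : J, |∑ i, D i j * D i a.1| = ∑ i ∈ J, |∑ r, D r i * D r j| := by
              rw [show (∑ i ∈ J, |∑ r, D r i * D r j|)
                  = ∑ a : J, |∑ r, D r a.1 * D r j| from
                (Finset.sum_coe_sort J (fun i => |∑ r, D r i * D r j|)).symm]
              refine Finset.sum_congr rfl fun a _ => ?_
              congr 1
              exact Finset.sum_congr rfl fun r _ => mul_comm _ _
            rw [e]
            exact le_mu' hD k J hJ j hj
    calc |(∑ i, D i j * (x i - D.mulVec αo i)) - ∑ a : J, (∑ i, D i j * D i a.1) * w a|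
        ≤ |∑ i, D i j * (x i - D.mulVec αo i)|
          + |∑ a : J, (∑ i, D i j * D i a.1) * w a| := abs_sub _ _
      _ < lam := by nlinarith [hres]
  -- main inequality
  intro a hne
  have hq_eq : ∀ i, x i - D.mulVec a i
      = (x i - D.mulVec αh i) - D.mulVec (fun t => a t - αh t) i := by
    intro i
    have h1 : D.mulVec a = D.mulVec αh + D.mulVec (fun t => a t - αh t) := by
      have h0 : a = αh + fun t => a t - αh t := by
        funext t
        show a t = αh t + (a t - αh t)
        ring
      rw [← Matrix.mulVec_add, ← h0]
    rw [h1, Pi.add_apply]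
    ring
  have identity : lasso lam x D a = lasso lam x D αh
      + (∑ j, (lam * |a j| - lam * |αh j|
          - (∑ i, D i j * (x i - D.mulVec αh i)) * (a j - αh j)))
      + (1/2) * ∑ i, (D.mulVec (fun t => a t - αh t) i)^2 := by
    have e1 : ∑ i, (x i - D.mulVec a i)^2
        = ∑ i, (x i - D.mulVec αh i)^2
          - 2 * ∑ i, (x i - D.mulVec αh i) * D.mulVec (fun t => a t - αh t) i
          + ∑ i, (D.mulVec (fun t => a t - αh t) i)^2 := by
      rw [Finset.mul_sum, ← Finset.sum_sub_distrib, ← Finset.sum_add_distrib]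
      refine Finset.sum_congr rfl fun i _ => ?_
      rw [hq_eq i]; ring
    have e2 : ∑ i, (x i - D.mulVec αh i) * D.mulVec (fun t => a t - αh t) i
        = ∑ j, (∑ i, D i j * (x i - D.mulVec αh i)) * (a j - αh j) := by
      calc ∑ i, (x i - D.mulVec αh i) * D.mulVec (fun t => a t - αh t) i
          = ∑ i, ∑ j, D i j * (x i - D.mulVec αh i) * (a j - αh j) := by
            refine Finset.sum_congr rfl fun i _ => ?_
            simp only [Matrix.mulVec, dotProduct]
            rw [Finset.mul_sum]
            exact Finset.sum_congr rfl fun j _ => by ring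
        _ = ∑ j, ∑ i, D i j * (x i - D.mulVec αh i) * (a j - αh j) := Finset.sum_comm
        _ = ∑ j, (∑ i, D i j * (x i - D.mulVec αh i)) * (a j - αh j) :=
            Finset.sum_congr rfl fun j _ => (Finset.sum_mul _ _ _).symm
    have e3 : ∑ j, (lam * |a j| - lam * |αh j|
          - (∑ i, D i j * (x i - D.mulVec αh i)) * (a j - αh j))
        = lam * (∑ j, |a j|) - lam * (∑ j, |αh j|)
          - ∑ j, (∑ i, D i j * (x i - D.mulVec αh i)) * (a j - αh j) := by
      rw [Finset.sum_sub_distrib, Finset.sum_sub_distrib, ← Finset.mul_sum, ← Finset.mul_sum]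
    simp only [lasso, l1, l2sq]
    rw [e1, e2, e3]
    ring
  have hTnn : ∀ j, 0 ≤ lam * |a j| - lam * |αh j|
      - (∑ i, D i j * (x i - D.mulVec αh i)) * (a j - αh j) := by
    intro j
    by_cases hj : j ∈ J
    · rw [hcv_in j hj]
      rcases lt_trichotomy (αo j) 0 with h | h | h
      · have hsj : s j = -1 := by rw [hs]; exact Real.sign_of_neg h
        have hneg : αh j < 0 := (hpos j hj).2 h
        rw [hsj, abs_of_neg hneg]
        nlinarith [neg_abs_le (a j), le_abs_self (a j)]
      · exact absurd h (hαo_ne j hj)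
      · have hsj : s j = 1 := by rw [hs]; exact Real.sign_of_pos h
        have hposj : 0 < αh j := (hpos j hj).1 h
        rw [hsj, abs_of_pos hposj]
        nlinarith [neg_abs_le (a j), le_abs_self (a j)]
    · rw [hαh_out j hj]
      have h1 : (∑ i, D i j * (x i - D.mulVec αh i)) * (a j - 0)
          ≤ |∑ i, D i j * (x i - D.mulVec αh i)| * |a j| := by
        rw [sub_zero, ← abs_mul]
        exact le_abs_self _
      have h2 := hcv_out j hj
      have h3 : |∑ i, D i j * (x i - D.mulVec αh i)| * |a j| ≤ lam * |a j| :=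
        mul_le_mul_of_nonneg_right h2.le (abs_nonneg _)
      rw [abs_zero]
      linarith
  by_cases hcase : ∀ j ∉ J, a j = 0
  · have hsupp' : ∀ i ∉ J, a i - αh i = 0 := fun i hi => by
      rw [hcase i hi, hαh_out i hi, sub_zero]
    have hre : D.mulVec (fun t => a t - αh t)
        = (colsub D J).mulVec (fun b : J => a b.1 - αh b.1) :=
      mulVec_restrict D J _ hsupp'
    have hune : (fun b : J => a b.1 - αh b.1) ≠ 0 := by
      intro h0
      apply hne
      funext t
      by_cases ht : t ∈ J
      · have := congrFun h0 ⟨t, ht⟩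
        simpa [sub_eq_zero] using this
      · rw [hcase t ht, hαh_out t ht]
    have hqnn : (0:ℝ) ≤ ∑ i, (D.mulVec (fun t => a t - αh t) i)^2 :=
      Finset.sum_nonneg fun i _ => sq_nonneg _
    have hqpos : 0 < ∑ i, (D.mulVec (fun t => a t - αh t) i)^2 := by
      rcases hqnn.lt_or_eq with h | h
      · exact h
      · exfalso
        have hz : D.mulVec (fun t => a t - αh t) = 0 := by
          funext i
          have := (Finset.sum_eq_zero_iff_of_nonneg
            (fun i (_ : i ∈ Finset.univ) => sq_nonneg (D.mulVec (fun t => a t - αh t) i))).1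
            h.symm i (Finset.mem_univ i)
          exact (pow_eq_zero_iff two_ne_zero).1 this
        have hz2 : (gram D J).mulVec (fun b : J => a b.1 - αh b.1) = 0 := by
          rw [_root_.gram, ← Matrix.mulVec_mulVec, ← hre, hz, Matrix.mulVec_zero]
        obtain ⟨b, hb⟩ := Function.ne_iff.1 hune
        have hbnd := gram_inv_bound hD hmu hJ _ (c := 0)
          (fun a0 => by rw [hz2]; simp) b
        have hbb : 0 < |a b.1 - αh b.1| := abs_pos.2 hb
        nlinarith
    have hTsum : (0:ℝ) ≤ ∑ j, (lam * |a j| - lam * |αh j|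
        - (∑ i, D i j * (x i - D.mulVec αh i)) * (a j - αh j)) :=
      Finset.sum_nonneg fun j _ => hTnn j
    linarith [identity]
  · push_neg at hcase
    obtain ⟨j0, hj0, hja⟩ := hcase
    have hTpos : 0 < ∑ j, (lam * |a j| - lam * |αh j|
        - (∑ i, D i j * (x i - D.mulVec αh i)) * (a j - αh j)) := by
      refine Finset.sum_pos' (fun j _ => hTnn j) ⟨j0, Finset.mem_univ j0, ?_⟩
      rw [hαh_out j0 hj0]
      have h1 : (∑ i, D i j0 * (x i - D.mulVec αh i)) * (a j0 - 0)
          ≤ |∑ i, D i j0 * (x i - D.mulVec αh i)| * |a j0| := by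
        rw [sub_zero, ← abs_mul]
        exact le_abs_self _
      have h2 := hcv_out j0 hj0
      have h3 : 0 < |a j0| := abs_pos.2 hja
      rw [abs_zero]
      nlinarith
    have hqnn : (0:ℝ) ≤ ∑ i, (D.mulVec (fun t => a t - αh t) i)^2 :=
      Finset.sum_nonneg fun i _ => sq_nonneg _
    linarith [identity]
end
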